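/- arXiv:1709.07644 — 5 statements merged into one kernel-verified Lean document; each statement's English description precedes it below -/
import Mathlib

section
/- For every α ∈ (0,2), every x ∈ ℝ and every R > 0, the function u ↦ (1 − e^{ixu} + i x u 1_{{|u| ≤ R}})·|u|^{−1−α} is Lebesgue integrable on ℝ and ∫_ℝ (1 − e^{ixu} + i x u 1_{{|u| ≤ R}}) |u|^{−1−α} du = c(α)·|x|^α, where c(α) := ∫_ℝ (1 − cos u)·|u|^{−1−α} du ∈ (0,∞). In particular the value of the integral does not depend on R. -/
open MeasureTheory

section Aux

/-- Reflection of integrability through negation. -/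
lemma refl_intOn {f : ℝ → ℝ} {s : Set ℝ} (hs : MeasurableSet s)
    (h : IntegrableOn f s volume) :
    IntegrableOn (fun u => f (-u)) (Neg.neg ⁻¹' s) volume := by
  have h1 : Integrable (s.indicator f) volume := (integrable_indicator_iff hs).2 h
  have h2 : Integrable (fun x => s.indicator f (-x)) volume := h1.comp_neg
  have h3 : (Neg.neg ⁻¹' s).indicator (fun u => f (-u)) = fun x => s.indicator f (-x) := by
    funext x
    by_cases hx : -x ∈ s <;> simp [Set.indicator_apply, hx]
  refine (integrable_indicator_iff (hs.preimage measurable_neg)).1 ?_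
  rw [h3]; exact h2

lemma intOn_abs_rpow_Icc {s : ℝ} (hs : -1 < s) {r : ℝ} (hr : 0 < r) :
    IntegrableOn (fun u : ℝ => |u| ^ s) (Set.Icc (-r) r) volume := by
  have hpos : IntegrableOn (fun u : ℝ => |u| ^ s) (Set.Ioc 0 r) volume := by
    have h := intervalIntegral.intervalIntegrable_rpow' (a := 0) (b := r) hs
    rw [intervalIntegrable_iff, Set.uIoc_of_le hr.le] at h
    exact h.congr_fun (fun u hu => by rw [abs_of_pos hu.1]) measurableSet_Ioc
  have hneg : IntegrableOn (fun u : ℝ => |u| ^ s) (Set.Ico (-r) 0) volume := by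
    have h2 := refl_intOn measurableSet_Ioc hpos
    have hset : (Neg.neg ⁻¹' Set.Ioc 0 r) = Set.Ico (-r) 0 := by
      ext u
      simp only [Set.mem_preimage, Set.mem_Ioc, Set.mem_Ico]
      constructor
      · rintro ⟨h1, h2⟩; exact ⟨by linarith, by linarith⟩
      · rintro ⟨h1, h2⟩; exact ⟨by linarith, by linarith⟩
    have hfun : (fun u : ℝ => |(-u)| ^ s) = fun u : ℝ => |u| ^ s := by
      funext u; rw [abs_neg]
    rw [hset, hfun] at h2
    exact h2
  have h0 : IntegrableOn (fun u : ℝ => |u| ^ s) ({0} : Set ℝ) volume := by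
    rw [IntegrableOn, show volume.restrict ({0} : Set ℝ) = 0 by
      simp [Measure.restrict_eq_zero]]
    exact integrable_zero_measure
  have hsub : Set.Icc (-r) r ⊆ (Set.Ico (-r) 0 ∪ Set.Ioc 0 r) ∪ ({0} : Set ℝ) := by
    intro u hu
    rcases lt_trichotomy u 0 with h | h | h
    · exact Or.inl (Or.inl ⟨hu.1, h⟩)
    · exact Or.inr (by simp [h])
    · exact Or.inl (Or.inr ⟨h, hu.2⟩)
  exact (((hneg.union hpos).union h0).mono_set hsub)

lemma intOn_abs_rpow_Ioi {s : ℝ} (hs : s < -1) {r : ℝ} (hr : 0 < r) :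
    IntegrableOn (fun u : ℝ => |u| ^ s) (Set.Ioi r) volume :=
  (integrableOn_Ioi_rpow_of_lt hs hr).congr_fun
    (fun u hu => by rw [abs_of_pos (lt_trans hr hu)]) measurableSet_Ioi

lemma intOn_abs_rpow_Iio {s : ℝ} (hs : s < -1) {r : ℝ} (hr : 0 < r) :
    IntegrableOn (fun u : ℝ => |u| ^ s) (Set.Iio (-r)) volume := by
  have h2 := refl_intOn measurableSet_Ioi (intOn_abs_rpow_Ioi hs hr)
  have hset : (Neg.neg ⁻¹' Set.Ioi r) = Set.Iio (-r) := by
    ext u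
    simp only [Set.mem_preimage, Set.mem_Ioi, Set.mem_Iio]
    constructor <;> intro h <;> linarith
  have hfun : (fun u : ℝ => |(-u)| ^ s) = fun u : ℝ => |u| ^ s := by
    funext u; rw [abs_neg]
  rw [hset, hfun] at h2
  exact h2

lemma integrable_of_parts {f : ℝ → ℝ} {b : ℝ} (hb : 0 < b)
    (h1 : IntegrableOn f (Set.Icc (-b) b) volume)
    (h2 : IntegrableOn f (Set.Iio (-b)) volume)
    (h3 : IntegrableOn f (Set.Ioi b) volume) : Integrable f volume := by
  rw [← integrableOn_univ]
  have huniv : (Set.univ : Set ℝ) = (Set.Iio (-b) ∪ Set.Icc (-b) b) ∪ Set.Ioi b := by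
    ext u
    simp only [Set.mem_univ, Set.mem_union, Set.mem_Iio, Set.mem_Icc, Set.mem_Ioi, true_iff]
    rcases lt_or_ge u (-b) with h | h
    · exact Or.inl (Or.inl h)
    · rcases le_or_gt u b with h' | h'
      · exact Or.inl (Or.inr ⟨h, h'⟩)
      · exact Or.inr h'
  rw [huniv]
  exact (h2.union h1).union h3

/-- Main integrability criterion: quadratically vanishing at 0, bounded globally. -/
lemma aux_int {α : ℝ} (hα : α ∈ Set.Ioo (0:ℝ) 2) {f : ℝ → ℝ}
    (hf : AEStronglyMeasurable (fun u => f u * |u| ^ (-1 - α)) volume)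
    {C C' b : ℝ} (hb : 0 < b) (hC : 0 ≤ C)
    (h1 : ∀ u, |u| ≤ b → |f u| ≤ C * u ^ 2) (h2 : ∀ u, |f u| ≤ C') :
    Integrable (fun u => f u * |u| ^ (-1 - α)) volume := by
  obtain ⟨hα0, hα2⟩ := hα
  have hnorm : ∀ u : ℝ, ‖f u * |u| ^ (-1 - α)‖ = |f u| * |u| ^ (-1 - α) := by
    intro u
    rw [Real.norm_eq_abs, abs_mul, abs_of_nonneg (Real.rpow_nonneg (abs_nonneg u) _)]
  have key : ∀ u : ℝ, |u| ≤ b → |f u| * |u| ^ (-1 - α) ≤ C * |u| ^ (1 - α) := by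
    intro u hu
    rcases eq_or_ne u 0 with rfl | hu0
    · simp only [abs_zero]
      rw [Real.zero_rpow (by linarith : (-1 : ℝ) - α ≠ 0), mul_zero]
      positivity
    · have habs : (0:ℝ) < |u| := abs_pos.2 hu0
      calc |f u| * |u| ^ (-1 - α) ≤ (C * u ^ 2) * |u| ^ (-1 - α) :=
            mul_le_mul_of_nonneg_right (h1 u hu) (Real.rpow_nonneg (abs_nonneg u) _)
        _ = C * (|u| ^ (2:ℝ) * |u| ^ (-1 - α)) := by
            rw [← sq_abs, ← Real.rpow_natCast |u| 2]; push_cast; ring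
        _ = C * |u| ^ (1 - α) := by
            rw [← Real.rpow_add habs, show (2:ℝ) + (-1 - α) = 1 - α by ring]
  apply integrable_of_parts hb
  · refine Integrable.mono' ((intOn_abs_rpow_Icc (by linarith : (-1:ℝ) < 1 - α) hb).const_mul C)
      hf.restrict ?_
    rw [ae_restrict_iff' measurableSet_Icc]
    filter_upwards with u hu
    rw [hnorm]
    exact key u (abs_le.2 hu)
  · refine Integrable.mono' ((intOn_abs_rpow_Iio (by linarith : (-1:ℝ) - α < -1) hb).const_mul C')
      hf.restrict ?_
    rw [ae_restrict_iff' measurableSet_Iio]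
    filter_upwards with u _
    rw [hnorm]
    exact mul_le_mul_of_nonneg_right (h2 u) (Real.rpow_nonneg (abs_nonneg u) _)
  · refine Integrable.mono' ((intOn_abs_rpow_Ioi (by linarith : (-1:ℝ) - α < -1) hb).const_mul C')
      hf.restrict ?_
    rw [ae_restrict_iff' measurableSet_Ioi]
    filter_upwards with u _
    rw [hnorm]
    exact mul_le_mul_of_nonneg_right (h2 u) (Real.rpow_nonneg (abs_nonneg u) _)

lemma cos_part_integrable {α : ℝ} (hα : α ∈ Set.Ioo (0:ℝ) 2) (x : ℝ) :
    Integrable (fun u : ℝ => (1 - Real.cos (x * u)) * |u| ^ (-1 - α)) volume := by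
  apply aux_int hα (C := x ^ 2 / 2) (C' := 2) (b := 1) ?_ one_pos (by positivity)
  · intro u _
    have h1 : 1 - (x*u)^2/2 ≤ Real.cos (x*u) := Real.one_sub_sq_div_two_le_cos
    have h2 : Real.cos (x*u) ≤ 1 := Real.cos_le_one _
    rw [abs_of_nonneg (by linarith)]
    nlinarith [sq_nonneg (x*u)]
  · intro u
    have h2 : Real.cos (x*u) ≤ 1 := Real.cos_le_one _
    have h3 : -1 ≤ Real.cos (x*u) := Real.neg_one_le_cos _
    rw [abs_of_nonneg (by linarith)]
    linarith
  · exact (Measurable.mul (by fun_prop) (by fun_prop)).aestronglyMeasurable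

lemma abs_self_sub_sin_le_of_nonneg {t : ℝ} (ht : 0 ≤ t) : |t - Real.sin t| ≤ 2 * t ^ 2 := by
  rw [abs_of_nonneg (by linarith [Real.sin_le ht])]
  rcases le_or_gt t 1 with h1 | h1
  · rcases eq_or_lt_of_le ht with rfl | ht'
    · simp
    · have h := Real.sin_gt_sub_cube ht'
      nlinarith
  · have h := Real.neg_one_le_sin t
    nlinarith

lemma abs_self_sub_sin_le (t : ℝ) : |t - Real.sin t| ≤ 2 * t ^ 2 := by
  rcases le_or_gt 0 t with h | h
  · exact abs_self_sub_sin_le_of_nonneg h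
  · have h2 := abs_self_sub_sin_le_of_nonneg (t := -t) (by linarith)
    have h3 : -t - Real.sin (-t) = -(t - Real.sin t) := by
      rw [Real.sin_neg]; ring
    rw [h3, abs_neg, neg_pow] at h2
    simpa using h2

lemma sin_part_integrable {α : ℝ} (hα : α ∈ Set.Ioo (0:ℝ) 2) (x R : ℝ) (hR : 0 < R) :
    Integrable (fun u : ℝ =>
      (x * u * ({v : ℝ | |v| ≤ R}.indicator (fun _ => (1:ℝ)) u) - Real.sin (x * u))
        * |u| ^ (-1 - α)) volume := by
  have hSeq : {v : ℝ | |v| ≤ R} = Set.Icc (-R) R := by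
    ext v; simp [abs_le]
  have hSmeas : MeasurableSet {v : ℝ | |v| ≤ R} := by
    rw [hSeq]; exact measurableSet_Icc
  apply aux_int hα (C := 2 * x ^ 2) (C' := |x| * R + 1) (b := R) ?_ hR (by positivity)
  · intro u hu
    have hind : ({v : ℝ | |v| ≤ R}.indicator (fun _ => (1:ℝ)) u) = 1 :=
      Set.indicator_of_mem (by simpa using hu) _
    rw [hind, mul_one]
    calc |x * u - Real.sin (x * u)| ≤ 2 * (x * u) ^ 2 := abs_self_sub_sin_le (x * u)
      _ = 2 * x ^ 2 * u ^ 2 := by ring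
  · intro u
    have hind : |x * u * ({v : ℝ | |v| ≤ R}.indicator (fun _ => (1:ℝ)) u)| ≤ |x| * R := by
      by_cases h : u ∈ {v : ℝ | |v| ≤ R}
      · rw [Set.indicator_of_mem h, mul_one, abs_mul]
        exact mul_le_mul_of_nonneg_left (by simpa using h) (abs_nonneg x)
      · rw [Set.indicator_of_notMem h, mul_zero, abs_zero]
        positivity
    calc |x * u * ({v : ℝ | |v| ≤ R}.indicator (fun _ => (1:ℝ)) u) - Real.sin (x * u)|
        ≤ |x * u * ({v : ℝ | |v| ≤ R}.indicator (fun _ => (1:ℝ)) u)| + |Real.sin (x * u)| :=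
          abs_sub (_) (_)
      _ ≤ |x| * R + 1 := add_le_add hind (abs_le.2 ⟨by linarith [Real.neg_one_le_sin (x*u)], Real.sin_le_one (x*u)⟩)
  · apply Measurable.aestronglyMeasurable
    apply Measurable.mul
    · apply Measurable.sub
      · exact ((measurable_const.mul measurable_id).mul
          (Measurable.indicator measurable_const hSmeas))
      · exact Real.measurable_sin.comp (measurable_const.mul measurable_id)
    · fun_prop

end Aux

/-- For every `α ∈ (0,2)`, every `x ∈ ℝ` and every `R > 0`, the function
`u ↦ (1 − e^{ixu} + i x u 1_{|u| ≤ R})·|u|^{−1−α}` is Lebesgue integrable on `ℝ` and its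
integral equals `c(α)·|x|^α`, where `c(α) := ∫ (1 − cos u)·|u|^{−1−α} du ∈ (0,∞)`.
In particular the value of the integral does not depend on `R`. -/
theorem stmt_0 (α : ℝ) (hα : α ∈ Set.Ioo (0:ℝ) 2) (x R : ℝ) (hR : 0 < R) :
    Integrable (fun u : ℝ => (1 - Real.cos u) * |u| ^ (-1 - α)) volume ∧
    0 < (∫ u : ℝ, (1 - Real.cos u) * |u| ^ (-1 - α)) ∧
    Integrable (fun u : ℝ =>
      (1 - Complex.exp (Complex.I * (x : ℂ) * (u : ℂ))
          + Complex.I * (x : ℂ) * (u : ℂ) * ({v : ℝ | |v| ≤ R}.indicator (fun _ => (1:ℂ)) u))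
        * ((|u| ^ (-1 - α) : ℝ) : ℂ)) volume ∧
    (∫ u : ℝ,
      (1 - Complex.exp (Complex.I * (x : ℂ) * (u : ℂ))
          + Complex.I * (x : ℂ) * (u : ℂ) * ({v : ℝ | |v| ≤ R}.indicator (fun _ => (1:ℂ)) u))
        * ((|u| ^ (-1 - α) : ℝ) : ℂ))
      = (((∫ u : ℝ, (1 - Real.cos u) * |u| ^ (-1 - α)) * |x| ^ α : ℝ) : ℂ) := by
  obtain ⟨hα0, hα2⟩ := hα
  have hα' : α ∈ Set.Ioo (0:ℝ) 2 := ⟨hα0, hα2⟩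
  have hc_int : Integrable (fun u : ℝ => (1 - Real.cos u) * |u| ^ (-1 - α)) volume := by
    simpa using cos_part_integrable hα' 1
  have hnn : 0 ≤ fun u : ℝ => (1 - Real.cos u) * |u| ^ (-1 - α) := fun u =>
    mul_nonneg (by linarith [Real.cos_le_one u]) (Real.rpow_nonneg (abs_nonneg u) _)
  have hc_pos : 0 < ∫ u : ℝ, (1 - Real.cos u) * |u| ^ (-1 - α) := by
    rw [integral_pos_iff_support_of_nonneg hnn hc_int]
    refine lt_of_lt_of_le ?_ (measure_mono (show Set.Ioo (2:ℝ) 3 ⊆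
      Function.support fun u => (1 - Real.cos u) * |u| ^ (-1 - α) from ?_))
    · rw [Real.volume_Ioo]; norm_num
    · intro u hu
      obtain ⟨h2, h3⟩ := hu
      have hcos : Real.cos u ≤ 0 :=
        Real.cos_nonpos_of_pi_div_two_le_of_le (by linarith [Real.pi_le_four])
          (by linarith [Real.pi_gt_three])
      have hupos : (0:ℝ) < u := by linarith
      have hprod : 0 < (1 - Real.cos u) * |u| ^ (-1 - α) :=
        mul_pos (by linarith) (Real.rpow_pos_of_pos (abs_pos.2 (ne_of_gt hupos)) _)
      exact Function.mem_support.2 (ne_of_gt hprod)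
  refine ⟨hc_int, hc_pos, ?_⟩
  have hg1 : Integrable (fun u : ℝ => (1 - Real.cos (x*u)) * |u| ^ (-1 - α)) volume :=
    cos_part_integrable hα' x
  have hg2 : Integrable (fun u : ℝ =>
      (x * u * ({v : ℝ | |v| ≤ R}.indicator (fun _ => (1:ℝ)) u) - Real.sin (x * u))
        * |u| ^ (-1 - α)) volume := sin_part_integrable hα' x R hR
  have hpt : ∀ u : ℝ,
      (1 - Complex.exp (Complex.I * (x : ℂ) * (u : ℂ))
          + Complex.I * (x : ℂ) * (u : ℂ) * ({v : ℝ | |v| ≤ R}.indicator (fun _ => (1:ℂ)) u))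
        * ((|u| ^ (-1 - α) : ℝ) : ℂ)
      = (((1 - Real.cos (x*u)) * |u| ^ (-1 - α) : ℝ) : ℂ)
        + (((x * u * ({v : ℝ | |v| ≤ R}.indicator (fun _ => (1:ℝ)) u) - Real.sin (x * u))
            * |u| ^ (-1 - α) : ℝ) : ℂ) * Complex.I := by
    intro u
    have hχ : ({v : ℝ | |v| ≤ R}.indicator (fun _ => (1:ℂ)) u)
        = ((({v : ℝ | |v| ≤ R}.indicator (fun _ => (1:ℝ)) u) : ℝ) : ℂ) := by
      by_cases h : u ∈ {v : ℝ | |v| ≤ R} <;> simp [Set.indicator_apply, h]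
    rw [hχ, show Complex.I * (x:ℂ) * (u:ℂ) = ((x*u : ℝ) : ℂ) * Complex.I by push_cast; ring,
      Complex.exp_mul_I, ← Complex.ofReal_cos, ← Complex.ofReal_sin]
    push_cast
    ring
  have hFeq : (fun u : ℝ =>
      (1 - Complex.exp (Complex.I * (x : ℂ) * (u : ℂ))
          + Complex.I * (x : ℂ) * (u : ℂ) * ({v : ℝ | |v| ≤ R}.indicator (fun _ => (1:ℂ)) u))
        * ((|u| ^ (-1 - α) : ℝ) : ℂ))
      = fun u : ℝ => (((1 - Real.cos (x*u)) * |u| ^ (-1 - α) : ℝ) : ℂ)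
        + (((x * u * ({v : ℝ | |v| ≤ R}.indicator (fun _ => (1:ℝ)) u) - Real.sin (x * u))
            * |u| ^ (-1 - α) : ℝ) : ℂ) * Complex.I := funext hpt
  constructor
  · rw [hFeq]
    exact hg1.ofReal.add (hg2.ofReal.mul_const Complex.I)
  · have hint2 : (∫ u : ℝ, (x * u * ({v : ℝ | |v| ≤ R}.indicator (fun _ => (1:ℝ)) u)
        - Real.sin (x * u)) * |u| ^ (-1 - α)) = 0 := by
      set g : ℝ → ℝ := fun u => (x * u * ({v : ℝ | |v| ≤ R}.indicator (fun _ => (1:ℝ)) u)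
        - Real.sin (x * u)) * |u| ^ (-1 - α) with hgdef
      have hodd : ∀ u : ℝ, g (-u) = - g u := by
        intro u
        have hind : ({v : ℝ | |v| ≤ R}.indicator (fun _ => (1:ℝ)) (-u))
            = ({v : ℝ | |v| ≤ R}.indicator (fun _ => (1:ℝ)) u) := by
          by_cases h : |u| ≤ R <;>
            simp [Set.indicator_apply, Set.mem_setOf_eq, h, abs_neg]
        show (x * (-u) * ({v : ℝ | |v| ≤ R}.indicator (fun _ => (1:ℝ)) (-u))
            - Real.sin (x * (-u))) * |(-u)| ^ (-1 - α) = - g u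
        rw [hind, abs_neg, mul_neg, Real.sin_neg, hgdef]
        ring
      have hrefl : (∫ u : ℝ, g (-u)) = ∫ u : ℝ, g u := integral_neg_eq_self g volume
      have : (∫ u : ℝ, g (-u)) = - ∫ u : ℝ, g u := by
        simp_rw [hodd]
        exact integral_neg g
      rw [this] at hrefl
      linarith
    have hint1 : (∫ u : ℝ, (1 - Real.cos (x*u)) * |u| ^ (-1 - α))
        = (∫ u : ℝ, (1 - Real.cos u) * |u| ^ (-1 - α)) * |x| ^ α := by
      rcases eq_or_ne x 0 with rfl | hx
      · rw [abs_zero, Real.zero_rpow (ne_of_gt hα0), mul_zero]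
        simp
      · have hx' : (0:ℝ) < |x| := abs_pos.2 hx
        have habsid : ∀ u : ℝ, (1 - Real.cos (x*u)) * |u| ^ (-1 - α)
            = |x| ^ (1+α) * ((1 - Real.cos (x*u)) * |x*u| ^ (-1 - α)) := by
          intro u
          rcases eq_or_ne u 0 with rfl | hu
          · simp
          · rw [abs_mul, Real.mul_rpow (abs_nonneg x) (abs_nonneg u),
              show |x| ^ (1+α) * ((1 - Real.cos (x*u)) * (|x| ^ (-1 - α) * |u| ^ (-1 - α)))
                = (|x| ^ (1+α) * |x| ^ (-1 - α)) * ((1 - Real.cos (x*u)) * |u| ^ (-1 - α))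
                from by ring,
              ← Real.rpow_add hx', show (1+α) + (-1 - α) = (0:ℝ) by ring,
              Real.rpow_zero, one_mul]
        have hsub : (∫ u : ℝ, (1 - Real.cos (x*u)) * |x*u| ^ (-1 - α))
            = |x⁻¹| • ∫ v : ℝ, (1 - Real.cos v) * |v| ^ (-1 - α) :=
          MeasureTheory.Measure.integral_comp_mul_left (fun v => (1 - Real.cos v) * |v| ^ (-1 - α)) x
        calc (∫ u : ℝ, (1 - Real.cos (x*u)) * |u| ^ (-1 - α))
            = ∫ u : ℝ, |x| ^ (1+α) * ((1 - Real.cos (x*u)) * |x*u| ^ (-1 - α)) := by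
              simp_rw [habsid]
          _ = |x| ^ (1+α) * ∫ u : ℝ, (1 - Real.cos (x*u)) * |x*u| ^ (-1 - α) :=
              integral_const_mul _ _
          _ = (∫ u : ℝ, (1 - Real.cos u) * |u| ^ (-1 - α)) * |x| ^ α := by
              rw [hsub, smul_eq_mul, abs_inv,
                show |x|⁻¹ = |x| ^ (-1:ℝ) from (Real.rpow_neg_one |x|).symm,
                show |x| ^ (1+α) * (|x| ^ (-1:ℝ) * ∫ u : ℝ, (1 - Real.cos u) * |u| ^ (-1 - α))
                  = (|x| ^ (1+α) * |x| ^ (-1:ℝ)) * ∫ u : ℝ, (1 - Real.cos u) * |u| ^ (-1 - α)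
                  from by ring,
                ← Real.rpow_add hx', show (1+α) + (-1:ℝ) = α by ring]
              ring
    have hA : Integrable (fun u : ℝ =>
        (((1 - Real.cos (x*u)) * |u| ^ (-1 - α) : ℝ) : ℂ)) volume := hg1.ofReal
    have hB : Integrable (fun u : ℝ =>
        (((x * u * ({v : ℝ | |v| ≤ R}.indicator (fun _ => (1:ℝ)) u) - Real.sin (x * u))
          * |u| ^ (-1 - α) : ℝ) : ℂ) * Complex.I) volume := hg2.ofReal.mul_const Complex.I
    have e1 : (∫ u : ℝ, (((1 - Real.cos (x*u)) * |u| ^ (-1 - α) : ℝ) : ℂ))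
        = (((∫ u : ℝ, (1 - Real.cos (x*u)) * |u| ^ (-1 - α)) : ℝ) : ℂ) := integral_ofReal
    have e2 : (∫ u : ℝ, (((x * u * ({v : ℝ | |v| ≤ R}.indicator (fun _ => (1:ℝ)) u)
          - Real.sin (x * u)) * |u| ^ (-1 - α) : ℝ) : ℂ))
        = (((∫ u : ℝ, (x * u * ({v : ℝ | |v| ≤ R}.indicator (fun _ => (1:ℝ)) u)
          - Real.sin (x * u)) * |u| ^ (-1 - α)) : ℝ) : ℂ) := integral_ofReal
    rw [hFeq, integral_add hA hB, integral_mul_const, e1, e2, hint1, hint2]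
    simp
end

section
/- There exists a constant C₀ > 0, depending only on β, such that for every K > 0 and every ε > 0 there is T₀ ≥ 1 with ∫_K^∞ ψ_T(z)^{−1} dz ≤ C₀·K^{1−β} + ε for all T ≥ T₀. -/
open MeasureTheory
open Filter Set

section AuxLemmas

/-- Uniform convergence theorem for slowly oscillating measurable functions. -/
lemma uct_aux (q : ℝ → ℝ) (hq : Measurable q)
    (hlim : ∀ t : ℝ, Tendsto (fun u => q (u + t) - q u) atTop (nhds 0))
    {δ : ℝ} (hδ : 0 < δ) :
    ∃ U₀ : ℝ, ∀ u ≥ U₀, ∀ t ∈ Icc (0:ℝ) 1, |q (u + t) - q u| ≤ δ := by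
  by_contra hcon
  push_neg at hcon
  choose uu huu tt htt hqtt using hcon
  set v : ℕ → ℝ := fun n => uu n with hv
  have hvtop : Tendsto v atTop atTop :=
    tendsto_atTop_mono (fun n => (huu (n : ℝ))) tendsto_natCast_atTop_atTop
  have hwtop : Tendsto (fun n => v n + tt (n : ℝ)) atTop atTop :=
    tendsto_atTop_mono (fun n => by have := (htt (n : ℝ)).1; linarith) hvtop
  -- the "bad" sets
  set B : ℕ → Set ℝ := fun n =>
    Icc (0:ℝ) 2 ∩ {x | δ/3 < |q (v n + x) - q (v n)|} with hB
  set B' : ℕ → Set ℝ := fun n =>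
    Icc (0:ℝ) 1 ∩ {x | δ/3 < |q (v n + tt (n:ℝ) + x) - q (v n + tt (n:ℝ))|} with hB'
  have hmeas : ∀ (c : ℝ), Measurable (fun x : ℝ => |q (c + x) - q c|) := fun c =>
    ((hq.comp (measurable_id.const_add c)).sub measurable_const).abs
  have hBmeas : ∀ n, MeasurableSet (B n) := fun n =>
    measurableSet_Icc.inter ((hmeas (v n)) measurableSet_Ioi)
  have hB'meas : ∀ n, MeasurableSet (B' n) := fun n =>
    measurableSet_Icc.inter ((hmeas (v n + tt (n:ℝ))) measurableSet_Ioi)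
  -- measures of bad sets tend to zero
  have key : ∀ (w : ℕ → ℝ), Tendsto w atTop atTop → ∀ (a b : ℝ),
      Tendsto (fun n => (volume (Icc a b ∩ {x | δ/3 < |q (w n + x) - q (w n)|})).toReal)
        atTop (nhds 0) := by
    intro w hw a b
    set C : ℕ → Set ℝ := fun n => Icc a b ∩ {x | δ/3 < |q (w n + x) - q (w n)|} with hC
    have hCmeas : ∀ n, MeasurableSet (C n) := fun n =>
      measurableSet_Icc.inter ((hmeas (w n)) measurableSet_Ioi)
    have h0 : Tendsto (fun n => ∫ x, (C n).indicator (fun _ => (1:ℝ)) x) atTop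
        (nhds (∫ _x : ℝ, (0:ℝ))) := by
      apply tendsto_integral_of_dominated_convergence
        (bound := (Icc a b).indicator (fun _ => (1:ℝ)))
      · intro n
        exact ((measurable_one.indicator (hCmeas n)).aestronglyMeasurable)
      · exact (integrable_indicator_iff measurableSet_Icc).2 (integrableOn_const measure_Icc_lt_top.ne)
      · intro n
        refine Filter.Eventually.of_forall (fun x => ?_)
        by_cases hx : x ∈ C n
        · rw [Set.indicator_of_mem hx, Set.indicator_of_mem hx.1]
          simp
        · rw [Set.indicator_of_notMem hx]
          simp [Set.indicator_apply]
          positivity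
      · refine Filter.Eventually.of_forall (fun x => ?_)
        have hx : Tendsto (fun n => q (w n + x) - q (w n)) atTop (nhds 0) :=
          (hlim x).comp hw
        have : ∀ᶠ n in atTop, |q (w n + x) - q (w n)| < δ/3 := by
          have := hx.abs
          rw [abs_zero] at this
          exact this.eventually_lt_const (by linarith)
        refine Tendsto.congr' ?_ tendsto_const_nhds
        filter_upwards [this] with n hn
        have : x ∉ C n := fun hmem => absurd hmem.2 (by simpa using hn.le.not_gt)
        rw [Set.indicator_of_notMem this]
    simp only [integral_zero] at h0
    refine h0.congr (fun n => ?_)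
    rw [integral_indicator_const (1:ℝ) (hCmeas n)]
    simp
    rfl
  have hBto : Tendsto (fun n => (volume (B n)).toReal) atTop (nhds 0) := key v hvtop 0 2
  have hB'to : Tendsto (fun n => (volume (B' n)).toReal) atTop (nhds 0) := by
    have := key (fun n => v n + tt (n:ℝ)) hwtop 0 1
    exact this
  -- choose n where both bad sets have measure < 1/4
  have hev : ∀ᶠ n in atTop, (volume (B n)).toReal < 1/4 ∧ (volume (B' n)).toReal < 1/4 :=
    (hBto.eventually_lt_const (by norm_num)).and (hB'to.eventually_lt_const (by norm_num))
  obtain ⟨n, hn⟩ := hev.exists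
  -- set up the translation argument
  set c : ℝ := tt (n:ℝ) with hc
  have hc01 : c ∈ Icc (0:ℝ) 1 := htt (n:ℝ)
  set G : Set ℝ := Icc (0:ℝ) 2 \ B n with hG
  set S : Set ℝ := (fun x => x + (-c)) ⁻¹' (Icc (0:ℝ) 1 \ B' n) with hS
  have hSmeas : MeasurableSet S :=
    (measurableSet_Icc.diff (hB'meas n)).preimage (measurable_id.add_const _)
  have hfin : ∀ s : Set ℝ, s ⊆ Icc (0:ℝ) 2 → volume s ≠ ⊤ := by
    intro s hs
    exact (lt_of_le_of_lt (measure_mono hs) measure_Icc_lt_top).ne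
  have hBfin : volume (B n) ≠ ⊤ := hfin _ (Set.inter_subset_left)
  have hB'fin : volume (B' n) ≠ ⊤ :=
    hfin _ ((Set.inter_subset_left).trans (Icc_subset_Icc le_rfl (by norm_num)))
  have hBsmall : volume (B n) ≤ ENNReal.ofReal (1/4) := by
    rw [← ENNReal.lt_ofReal_iff_toReal_lt hBfin] at hn
    exact hn.1.le
  have hB'small : volume (B' n) ≤ ENNReal.ofReal (1/4) := by
    have := (ENNReal.lt_ofReal_iff_toReal_lt hB'fin).2 hn.2
    exact this.le
  -- measure of S
  have hSvol : volume S = volume (Icc (0:ℝ) 1 \ B' n) :=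
    measure_preimage_add_right volume (-c) _
  -- lower bounds
  have hGlow : ENNReal.ofReal 2 ≤ volume (B n) + volume G := by
    have : Icc (0:ℝ) 2 ⊆ B n ∪ G := fun x hx => by
      by_cases h : x ∈ B n
      · exact Or.inl h
      · exact Or.inr ⟨hx, h⟩
    calc ENNReal.ofReal 2 = volume (Icc (0:ℝ) 2) := by simp [Real.volume_Icc]
    _ ≤ volume (B n ∪ G) := measure_mono this
    _ ≤ volume (B n) + volume G := measure_union_le _ _
  have hSlow : ENNReal.ofReal 1 ≤ volume (B' n) + volume S := by
    have : Icc (0:ℝ) 1 ⊆ B' n ∪ (Icc (0:ℝ) 1 \ B' n) := fun x hx => by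
      by_cases h : x ∈ B' n
      · exact Or.inl h
      · exact Or.inr ⟨hx, h⟩
    calc ENNReal.ofReal 1 = volume (Icc (0:ℝ) 1) := by simp [Real.volume_Icc]
    _ ≤ volume (B' n ∪ (Icc (0:ℝ) 1 \ B' n)) := measure_mono this
    _ ≤ volume (B' n) + volume (Icc (0:ℝ) 1 \ B' n) := measure_union_le _ _
    _ = volume (B' n) + volume S := by rw [hSvol]
  -- G ∪ S ⊆ Icc 0 2
  have hGsub : G ⊆ Icc (0:ℝ) 2 := Set.diff_subset
  have hSsub : S ⊆ Icc (0:ℝ) 2 := by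
    intro x hx
    have h1 : x + (-c) ∈ Icc (0:ℝ) 1 := hx.1
    constructor
    · have := h1.1; have := hc01.1; linarith [h1.1]
    · have := h1.2; have := hc01.2; linarith [h1.2]
  -- intersection is nonempty
  have hinter : volume (G ∩ S) ≠ 0 := by
    intro h0
    have hui : volume (G ∪ S) + volume (G ∩ S) = volume G + volume S :=
      measure_union_add_inter G hSmeas
    rw [h0, add_zero] at hui
    have hGS2 : volume (G ∪ S) ≤ ENNReal.ofReal 2 := by
      calc volume (G ∪ S) ≤ volume (Icc (0:ℝ) 2) :=
        measure_mono (Set.union_subset hGsub hSsub)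
      _ = ENNReal.ofReal 2 := by simp [Real.volume_Icc]
    have hsum : ENNReal.ofReal 2 + ENNReal.ofReal 1 ≤
        (volume (B n) + volume G) + (volume (B' n) + volume S) := add_le_add hGlow hSlow
    have : ENNReal.ofReal 2 + ENNReal.ofReal 1 ≤
        ENNReal.ofReal (1/4) + ENNReal.ofReal (1/4) + ENNReal.ofReal 2 := by
      calc ENNReal.ofReal 2 + ENNReal.ofReal 1
          ≤ (volume (B n) + volume G) + (volume (B' n) + volume S) := hsum
      _ = volume (B n) + volume (B' n) + (volume G + volume S) := by ring
      _ ≤ ENNReal.ofReal (1/4) + ENNReal.ofReal (1/4) + ENNReal.ofReal 2 := by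
          refine add_le_add (add_le_add hBsmall hB'small) ?_
          rw [← hui]; exact hGS2
    rw [← ENNReal.ofReal_add (by norm_num) (by norm_num),
      ← ENNReal.ofReal_add (by norm_num) (by norm_num),
      ← ENNReal.ofReal_add (by norm_num) (by norm_num)] at this
    rw [ENNReal.ofReal_le_ofReal_iff (by norm_num)] at this
    norm_num at this
  obtain ⟨x, hxG, hxS⟩ := MeasureTheory.nonempty_of_measure_ne_zero hinter
  -- derive the contradiction
  have h1 : ¬ (δ/3 < |q (v n + x) - q (v n)|) := fun h => hxG.2 ⟨hxG.1, h⟩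
  have h2 : ¬ (δ/3 < |q (v n + c + (x + (-c))) - q (v n + c)|) := fun h => hxS.2 ⟨hxS.1, h⟩
  push_neg at h1 h2
  have harg : v n + c + (x + (-c)) = v n + x := by ring
  rw [harg] at h2
  have : |q (v n + c) - q (v n)| ≤ 2 * (δ/3) := by
    calc |q (v n + c) - q (v n)|
        ≤ |q (v n + c) - q (v n + x)| + |q (v n + x) - q (v n)| := abs_sub_le _ _ _
    _ ≤ δ/3 + δ/3 := by
        refine add_le_add ?_ h1
        rw [abs_sub_comm]; exact h2
    _ = 2 * (δ/3) := by ring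
  have hcontr := hqtt (n:ℝ)
  rw [← hc] at hcontr
  linarith [hcontr, this]


lemma chain_aux (q : ℝ → ℝ) {δ U₁ : ℝ} (hδ : 0 < δ)
    (huct : ∀ u ≥ U₁, ∀ t ∈ Icc (0:ℝ) 1, |q (u + t) - q u| ≤ δ) :
    ∀ v w : ℝ, U₁ ≤ v → v ≤ w → |q w - q v| ≤ δ * (w - v) + δ := by
  have hstep : ∀ n : ℕ, ∀ v : ℝ, U₁ ≤ v → |q (v + n) - q v| ≤ δ * n := by
    intro n
    induction n with
    | zero => intro v _; simp
    | succ m ih =>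
      intro v hv
      have h1 : |q (v + m) - q v| ≤ δ * m := ih v hv
      have h2 : |q ((v + m) + 1) - q (v + m)| ≤ δ :=
        huct (v + m) (by linarith [Nat.cast_nonneg (α := ℝ) m]) 1 (by norm_num)
      have harg : v + (m + 1 : ℕ) = (v + m) + 1 := by push_cast; ring
      calc |q (v + (m+1:ℕ)) - q v|
          ≤ |q (v + (m+1:ℕ)) - q (v + m)| + |q (v + m) - q v| := abs_sub_le _ _ _
        _ ≤ δ + δ * m := by rw [harg]; exact add_le_add h2 h1
        _ = δ * (m+1:ℕ) := by push_cast; ring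
  intro v w hv hvw
  set n : ℕ := ⌊w - v⌋₊ with hn
  have h0 : (0:ℝ) ≤ w - v := by linarith
  have h1 : (n:ℝ) ≤ w - v := Nat.floor_le h0
  have h2 : w - v < n + 1 := Nat.lt_floor_add_one _
  have ht : w - (v + n) ∈ Icc (0:ℝ) 1 := ⟨by linarith, by linarith⟩
  have h3 : |q ((v + n) + (w - (v + n))) - q (v + n)| ≤ δ :=
    huct (v + n) (by linarith [Nat.cast_nonneg (α := ℝ) n]) _ ht
  have harg : (v + n) + (w - (v + n)) = w := by ring
  rw [harg] at h3
  calc |q w - q v| ≤ |q w - q (v + n)| + |q (v + n) - q v| := abs_sub_le _ _ _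
    _ ≤ δ + δ * n := add_le_add h3 (hstep n v hv)
    _ ≤ δ + δ * (w - v) := by nlinarith
    _ = δ * (w - v) + δ := by ring


end AuxLemmas

/-- The rescaled characteristic exponent `ψ_T(z) := T · f(T^{1/β})⁻¹ · ψ(z·T^{−1/β})`. -/
noncomputable def psiT (β : ℝ) (ψ f : ℝ → ℝ) (T z : ℝ) : ℝ :=
  T * (f (T ^ (1/β)))⁻¹ * ψ (z * T ^ (-(1/β)))

set_option maxHeartbeats 1000000 in
/-- Fix `β ∈ (1,2)`; let `ψ` be measurable, even, nonnegative and positive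
off `0`, satisfying the stable normalization condition `ψ_T(z) → |z|^β` (`z ≠ 0`),
`∫_1^∞ ψ(z)⁻¹ dz < ∞`, and `1/ψ` locally integrable on `(0,∞)`. Then there exists
`C₀ > 0`, depending only on `β`, such that for every `K > 0` and every `ε > 0` there is
`T₀ ≥ 1` with `∫_K^∞ ψ_T(z)⁻¹ dz ≤ C₀·K^{1−β} + ε` for all `T ≥ T₀`. -/
theorem stmt_4 (β : ℝ) (hβ : β ∈ Set.Ioo (1:ℝ) 2)
    (ψ f : ℝ → ℝ) (hψ_meas : Measurable ψ) (hψ_even : ∀ z : ℝ, ψ (-z) = ψ z)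
    (hψ_nonneg : ∀ z : ℝ, 0 ≤ ψ z) (hψ_pos : ∀ z : ℝ, z ≠ 0 → 0 < ψ z)
    (hf_pos : ∀ x > (0:ℝ), 0 < f x)
    (hstable : ∀ z : ℝ, z ≠ 0 →
      Filter.Tendsto (fun T : ℝ => psiT β ψ f T z) Filter.atTop (nhds (|z| ^ β)))
    (hint : IntegrableOn (fun z : ℝ => (ψ z)⁻¹) (Set.Ioi 1) volume)
    (hloc : ∀ a b : ℝ, 0 < a → IntegrableOn (fun z : ℝ => (ψ z)⁻¹) (Set.Icc a b) volume) :
    ∃ C₀ > (0:ℝ), ∀ K > (0:ℝ), ∀ ε > (0:ℝ), ∃ T₀ ≥ (1:ℝ), ∀ T ≥ T₀,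
      (∫ z in Set.Ioi K, (psiT β ψ f T z)⁻¹) ≤ C₀ * K ^ (1 - β) + ε := by
  obtain ⟨hβ1, hβ2⟩ := hβ
  have hβ0 : (0:ℝ) < β := by linarith
  set δ : ℝ := (β - 1) / 2 with hδdef
  set β' : ℝ := (β + 1) / 2 with hβ'def
  have hδ : 0 < δ := by rw [hδdef]; linarith
  have hβ'1 : 1 < β' := by rw [hβ'def]; linarith
  have hββ' : β - β' = δ := by rw [hβ'def, hδdef]; ring
  -- the log-scale increment function
  set q : ℝ → ℝ := fun u => -Real.log (ψ (Real.exp (-u))) - β * u with hqdef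
  have hqmeas : Measurable q := by
    apply Measurable.sub
    · exact (Real.measurable_log.comp (hψ_meas.comp (Real.measurable_exp.comp measurable_neg))).neg
    · exact measurable_const.mul measurable_id
  -- Step 1 : slow oscillation of q
  have hqlim : ∀ t : ℝ, Tendsto (fun u => q (u + t) - q u) atTop (nhds 0) := by
    intro t
    set z : ℝ := Real.exp (-t) with hzdef
    have hz : 0 < z := Real.exp_pos _
    have hz1 : (0:ℝ) < |z| ^ β := Real.rpow_pos_of_pos (by simpa [abs_of_pos hz] using hz) _
    have h1 := hstable z hz.ne'
    have h2 := hstable 1 one_ne_zero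
    have hone : |(1:ℝ)| ^ β = 1 := by simp
    have hdiv : Tendsto (fun T : ℝ => psiT β ψ f T z / psiT β ψ f T 1) atTop
        (nhds (|z| ^ β)) := by
      have := h1.div h2 (by rw [hone]; exact one_ne_zero)
      rw [hone, div_one] at this; exact this
    have hr : Tendsto (fun T : ℝ => ψ (z * T ^ (-(1/β))) / ψ (T ^ (-(1/β)))) atTop
        (nhds (z ^ β)) := by
      have heq : ∀ᶠ T : ℝ in atTop,
          psiT β ψ f T z / psiT β ψ f T 1 = ψ (z * T ^ (-(1/β))) / ψ (T ^ (-(1/β))) := by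
        filter_upwards [eventually_ge_atTop (1:ℝ)] with T hT
        have hT0 : (0:ℝ) < T := by linarith
        have hc0 : T * (f (T ^ (1/β)))⁻¹ ≠ 0 := by
          have := hf_pos (T ^ (1/β)) (Real.rpow_pos_of_pos hT0 _)
          positivity
        rw [psiT, psiT, one_mul, mul_div_mul_left _ _ hc0]
      have := (hdiv.congr' heq)
      rwa [abs_of_pos hz] at this
    have hexp : Tendsto (fun u : ℝ => Real.exp (β * u)) atTop atTop :=
      Real.tendsto_exp_atTop.comp (Tendsto.const_mul_atTop hβ0 tendsto_id)
    have hr2 := hr.comp hexp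
    have hkey : ∀ u : ℝ, (Real.exp (β * u)) ^ (-(1/β)) = Real.exp (-u) := by
      intro u
      rw [← Real.exp_mul]
      congr 1
      field_simp
    have hr3 : Tendsto (fun u : ℝ => ψ (z * Real.exp (-u)) / ψ (Real.exp (-u))) atTop
        (nhds (z ^ β)) := by
      refine hr2.congr (fun u => ?_)
      simp only [Function.comp, hkey]
    have hlog : Tendsto (fun u : ℝ => Real.log (ψ (z * Real.exp (-u)) / ψ (Real.exp (-u))))
        atTop (nhds (Real.log (z ^ β))) := by
      have hcont : ContinuousAt Real.log (z ^ β) :=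
        Real.continuousAt_log (ne_of_gt (Real.rpow_pos_of_pos hz _))
      exact hcont.tendsto.comp hr3
    have hlogval : Real.log (z ^ β) = β * (-t) := by
      rw [Real.log_rpow hz, hzdef, Real.log_exp]
    have heq2 : ∀ u : ℝ, q (u + t) - q u =
        -(Real.log (ψ (z * Real.exp (-u)) / ψ (Real.exp (-u)))) - β * t := by
      intro u
      have hargs : Real.exp (-(u + t)) = z * Real.exp (-u) := by
        rw [hzdef, ← Real.exp_add]; congr 1; ring
      have hne1 : ψ (z * Real.exp (-u)) ≠ 0 :=
        (hψ_pos _ (by positivity)).ne'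
      have hne2 : ψ (Real.exp (-u)) ≠ 0 := (hψ_pos _ (Real.exp_pos _).ne').ne'
      simp only [hqdef]
      rw [hargs, Real.log_div hne1 hne2]
      ring
    have hfin := (hlog.neg).sub_const (β * t)
    rw [hlogval] at hfin
    have hval : -(β * (-t)) - β * t = 0 := by ring
    rw [hval] at hfin
    exact hfin.congr (fun u => (heq2 u).symm)
  -- Step 2 : uniform convergence (UCT)
  obtain ⟨U₁, hU₁⟩ := uct_aux q hqmeas hqlim hδ
  have hchain := chain_aux q hδ hU₁
  -- Step 3 : Potter-type bound
  set U₂ : ℝ := max U₁ 0 with hU₂def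
  set s₁ : ℝ := Real.exp (-U₂) with hs₁def
  have hs₁pos : 0 < s₁ := Real.exp_pos _
  have hs₁le1 : s₁ ≤ 1 := by
    rw [hs₁def, Real.exp_le_one_iff]
    simp [hU₂def]
  have hψs₁ : 0 < ψ s₁ := hψ_pos _ hs₁pos.ne'
  have hmono : ∀ x s : ℝ, 0 < x → x ≤ s → s ≤ s₁ →
      (ψ s)⁻¹ * s ^ β' ≤ Real.exp δ * ((ψ x)⁻¹ * x ^ β') := by
    intro x s hx hxs hss₁
    have hs : 0 < s := lt_of_lt_of_le hx hxs
    set vv : ℝ := -Real.log s with hvvdef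
    set ww : ℝ := -Real.log x with hwwdef
    have hsv : s = Real.exp (-vv) := by rw [hvvdef, neg_neg, Real.exp_log hs]
    have hxw : x = Real.exp (-ww) := by rw [hwwdef, neg_neg, Real.exp_log hx]
    have hvw : vv ≤ ww := by
      rw [hvvdef, hwwdef]
      have := Real.log_le_log hx hxs
      linarith
    have hv1 : U₁ ≤ vv := by
      have hls : Real.log s ≤ -U₂ := by
        calc Real.log s ≤ Real.log s₁ := Real.log_le_log hs hss₁
        _ = -U₂ := by rw [hs₁def, Real.log_exp]
      have : U₂ ≤ vv := by rw [hvvdef]; linarith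
      exact le_trans (le_max_left _ _) this
    have hqb := hchain vv ww hv1 hvw
    obtain ⟨hqb1, hqb2⟩ := abs_le.1 hqb
    -- express everything as exponentials
    have hes : (ψ s)⁻¹ = Real.exp (q vv + β * vv) := by
      have heq : q vv + β * vv = Real.log (ψ s)⁻¹ := by
        simp only [hqdef]
        rw [← hsv, Real.log_inv]
        ring
      rw [heq, Real.exp_log (inv_pos.2 (hψ_pos _ hs.ne'))]
    have hex : (ψ x)⁻¹ = Real.exp (q ww + β * ww) := by
      have heq : q ww + β * ww = Real.log (ψ x)⁻¹ := by
        simp only [hqdef]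
        rw [← hxw, Real.log_inv]
        ring
      rw [heq, Real.exp_log (inv_pos.2 (hψ_pos _ hx.ne'))]
    have hesp : s ^ β' = Real.exp (-vv * β') := by
      rw [hsv, ← Real.exp_mul]
    have hexp' : x ^ β' = Real.exp (-ww * β') := by
      rw [hxw, ← Real.exp_mul]
    rw [hes, hex, hesp, hexp', ← Real.exp_add, ← Real.exp_add, ← Real.exp_add,
      Real.exp_le_exp]
    have hd : β - β' = δ := hββ'
    nlinarith [hqb1, hqb2, hvw]
  have hpotter : ∀ x s : ℝ, 0 < x → x ≤ s → s ≤ s₁ →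
      (ψ s)⁻¹ ≤ (Real.exp δ * ((ψ x)⁻¹ * x ^ β')) * s ^ (-β') := by
    intro x s hx hxs hss₁
    have hs : 0 < s := lt_of_lt_of_le hx hxs
    have h1 : (ψ s)⁻¹ = ((ψ s)⁻¹ * s ^ β') * s ^ (-β') := by
      rw [mul_assoc, ← Real.rpow_add hs]
      simp
    rw [h1]
    exact mul_le_mul_of_nonneg_right (hmono x s hx hxs hss₁) (Real.rpow_nonneg hs.le _)
  set C₂ : ℝ := Real.exp δ / (β' - 1) with hC₂def
  have hC₂pos : 0 < C₂ := by
    rw [hC₂def]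
    exact div_pos (Real.exp_pos _) (by linarith)
  -- block integral bound
  have hblock : ∀ x : ℝ, 0 < x → x ≤ s₁ →
      (∫ s in Ioc x s₁, (ψ s)⁻¹) ≤ C₂ * ((ψ x)⁻¹ * x) := by
    intro x hx hxs₁
    set c : ℝ := Real.exp δ * ((ψ x)⁻¹ * x ^ β') with hcdef
    have hc0 : 0 ≤ c := by
      have := hψ_pos x hx.ne'
      positivity
    have hInt1 : IntegrableOn (fun s : ℝ => (ψ s)⁻¹) (Ioc x s₁) volume :=
      (hloc x s₁ hx).mono_set Ioc_subset_Icc_self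
    have hIntr : IntegrableOn (fun s : ℝ => s ^ (-β')) (Ioi x) volume :=
      integrableOn_Ioi_rpow_of_lt (by linarith) hx
    have hInt2 : IntegrableOn (fun s : ℝ => c * s ^ (-β')) (Ioc x s₁) volume :=
      (hIntr.mono_set Ioc_subset_Ioi_self).const_mul c
    have step1 : (∫ s in Ioc x s₁, (ψ s)⁻¹) ≤ ∫ s in Ioc x s₁, c * s ^ (-β') := by
      refine setIntegral_mono_on hInt1 hInt2 measurableSet_Ioc (fun s hs => ?_)
      exact hpotter x s hx hs.1.le hs.2
    have step2 : (∫ s in Ioc x s₁, c * s ^ (-β')) = c * ∫ s in Ioc x s₁, s ^ (-β') :=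
      integral_const_mul c _
    have step3 : (∫ s in Ioc x s₁, s ^ (-β')) ≤ ∫ s in Ioi x, s ^ (-β') := by
      refine setIntegral_mono_set hIntr ?_ (HasSubset.Subset.eventuallyLE Ioc_subset_Ioi_self)
      filter_upwards [self_mem_ae_restrict measurableSet_Ioi] with s hs
      exact Real.rpow_nonneg (le_of_lt (lt_trans hx hs)) _
    have step4 : (∫ s in Ioi x, s ^ (-β')) = x ^ (1 - β') / (β' - 1) := by
      rw [integral_Ioi_rpow_of_lt (by linarith) hx]
      rw [show -β' + 1 = 1 - β' by ring]
      have hgen : ∀ A : ℝ, -A / (1 - β') = A / (β' - 1) := fun A => by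
        rw [show (1:ℝ) - β' = -(β' - 1) by ring, div_neg, neg_div, neg_neg]
      exact hgen _
    have hxpow : x ^ β' * x ^ (1 - β') = x := by
      rw [← Real.rpow_add hx]
      norm_num
    calc (∫ s in Ioc x s₁, (ψ s)⁻¹) ≤ c * ∫ s in Ioc x s₁, s ^ (-β') := by
          rw [← step2]; exact step1
      _ ≤ c * (x ^ (1 - β') / (β' - 1)) := by
          rw [← step4]
          refine mul_le_mul_of_nonneg_left step3 hc0
      _ = C₂ * ((ψ x)⁻¹ * x) := by
          rw [hcdef, hC₂def]
          rw [show Real.exp δ * ((ψ x)⁻¹ * x ^ β') * (x ^ (1 - β') / (β' - 1)) =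
            Real.exp δ / (β' - 1) * ((ψ x)⁻¹ * (x ^ β' * x ^ (1 - β'))) by ring, hxpow]
  -- tail integral
  have hIntTail : IntegrableOn (fun s : ℝ => (ψ s)⁻¹) (Ioi s₁) volume := by
    rw [← Ioc_union_Ioi_eq_Ioi hs₁le1]
    exact ((hloc s₁ 1 hs₁pos).mono_set Ioc_subset_Icc_self).union hint
  set M : ℝ := ∫ s in Ioi s₁, (ψ s)⁻¹ with hMdef
  have hM0 : 0 ≤ M :=
    setIntegral_nonneg measurableSet_Ioi (fun s _ => inv_nonneg.2 (hψ_nonneg s))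
  set c₄ : ℝ := Real.exp (-δ) * ((ψ s₁)⁻¹ * s₁ ^ β') with hc₄def
  have hc₄pos : 0 < c₄ := by
    have := hψs₁
    positivity
  refine ⟨C₂ + 1, by linarith, ?_⟩
  intro K hK ε hε
  set ε' : ℝ := ε / (2 * (C₂ * K + 1)) with hε'def
  have hε' : 0 < ε' := by
    rw [hε'def]
    have : 0 < C₂ * K := mul_pos hC₂pos hK
    positivity
  -- per-T estimate
  have main : ∀ T : ℝ, 1 ≤ T → K * T ^ (-(1/β)) ≤ s₁ →
      (∫ z in Ioi K, (psiT β ψ f T z)⁻¹) ≤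
        C₂ * K * (psiT β ψ f T K)⁻¹ +
          ((T * (f (T ^ (1/β)))⁻¹)⁻¹ * (T ^ (-(1/β)))⁻¹) * M := by
    intro T hT1 hKus₁
    have hT0 : (0:ℝ) < T := by linarith
    set u : ℝ := T ^ (-(1/β)) with hudef
    have hu : 0 < u := Real.rpow_pos_of_pos hT0 _
    set aT : ℝ := (T * (f (T ^ (1/β)))⁻¹)⁻¹ with haTdef
    have haT : 0 < aT := by
      have := hf_pos (T ^ (1/β)) (Real.rpow_pos_of_pos hT0 _)
      rw [haTdef]
      positivity
    have hKu : 0 < K * u := mul_pos hK hu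
    have eq1 : ∀ z : ℝ, (psiT β ψ f T z)⁻¹ = aT * (ψ (z * u))⁻¹ := by
      intro z
      rw [psiT, mul_inv, haTdef]
    have hInt1 : IntegrableOn (fun s : ℝ => (ψ s)⁻¹) (Ioc (K * u) s₁) volume :=
      (hloc (K * u) s₁ hKu).mono_set Ioc_subset_Icc_self
    have hsplit : (∫ s in Ioi (K * u), (ψ s)⁻¹) =
        (∫ s in Ioc (K * u) s₁, (ψ s)⁻¹) + M := by
      rw [hMdef, ← setIntegral_union (Ioc_disjoint_Ioi le_rfl) measurableSet_Ioi
        hInt1 hIntTail, Ioc_union_Ioi_eq_Ioi hKus₁]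
    have hcv : (∫ z in Ioi K, (ψ (z * u))⁻¹) = u⁻¹ • ∫ s in Ioi (K * u), (ψ s)⁻¹ :=
      integral_comp_mul_right_Ioi (fun s => (ψ s)⁻¹) K hu
    have hib : (∫ z in Ioi K, (psiT β ψ f T z)⁻¹) =
        aT * u⁻¹ * ((∫ s in Ioc (K * u) s₁, (ψ s)⁻¹) + M) := by
      calc (∫ z in Ioi K, (psiT β ψ f T z)⁻¹) = ∫ z in Ioi K, aT * (ψ (z * u))⁻¹ := by
            simp only [eq1]
        _ = aT * ∫ z in Ioi K, (ψ (z * u))⁻¹ := integral_const_mul aT _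
        _ = aT * (u⁻¹ * ((∫ s in Ioc (K * u) s₁, (ψ s)⁻¹) + M)) := by
            rw [hcv, smul_eq_mul, hsplit]
        _ = aT * u⁻¹ * ((∫ s in Ioc (K * u) s₁, (ψ s)⁻¹) + M) := by ring
    rw [hib]
    have hb := hblock (K * u) hKu hKus₁
    have hstep : aT * u⁻¹ * ((∫ s in Ioc (K * u) s₁, (ψ s)⁻¹) + M) ≤
        aT * u⁻¹ * (C₂ * ((ψ (K * u))⁻¹ * (K * u)) + M) := by
      refine mul_le_mul_of_nonneg_left (add_le_add hb le_rfl) ?_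
      positivity
    refine le_trans hstep ?_
    have hring : aT * u⁻¹ * (C₂ * ((ψ (K * u))⁻¹ * (K * u)) + M) =
        C₂ * K * (aT * (ψ (K * u))⁻¹) * (u⁻¹ * u) + aT * u⁻¹ * M := by ring
    rw [hring, inv_mul_cancel₀ hu.ne', mul_one, ← eq1 K]
  -- limit statements
  have humlim : Tendsto (fun T : ℝ => T ^ (-(1/β))) atTop (nhds 0) :=
    tendsto_rpow_neg_atTop (by positivity)
  have hevsmall : ∀ᶠ T : ℝ in atTop, K * T ^ (-(1/β)) ≤ s₁ ∧ T ^ (-(1/β)) ≤ s₁ := by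
    have h1 : Tendsto (fun T : ℝ => K * T ^ (-(1/β))) atTop (nhds (K * 0)) :=
      humlim.const_mul K
    rw [mul_zero] at h1
    exact (h1.eventually_le_const hs₁pos).and (humlim.eventually_le_const hs₁pos)
  -- the K-limit
  have hKb : (0:ℝ) < K ^ β := Real.rpow_pos_of_pos hK _
  have hKlim : Tendsto (fun T : ℝ => (psiT β ψ f T K)⁻¹) atTop (nhds ((K ^ β)⁻¹)) := by
    have := (hstable K hK.ne').inv₀ (by rw [abs_of_pos hK]; exact hKb.ne')
    rwa [abs_of_pos hK] at this
  have hevK : ∀ᶠ T : ℝ in atTop, (psiT β ψ f T K)⁻¹ ≤ (K ^ β)⁻¹ + ε' :=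
    hKlim.eventually_le_const (by linarith)
  -- the tail limit
  have h1lim : Tendsto (fun T : ℝ => (psiT β ψ f T 1)⁻¹) atTop (nhds 1) := by
    have := (hstable 1 one_ne_zero).inv₀ (by simp)
    simpa using this
  have hulim2 : Tendsto (fun T : ℝ => (T ^ (-(1/β))) ^ (β' - 1)) atTop (nhds 0) := by
    have hpos : 0 < (1/β) * (β' - 1) := by
      have : 0 < β' - 1 := by linarith
      positivity
    have h := tendsto_rpow_neg_atTop hpos
    refine h.congr' ?_
    filter_upwards [eventually_ge_atTop (0:ℝ)] with T hT
    rw [← Real.rpow_mul hT]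
    congr 1
    ring
  have htailb : Tendsto (fun T : ℝ =>
      ((psiT β ψ f T 1)⁻¹ * c₄⁻¹ * (T ^ (-(1/β))) ^ (β' - 1)) * M) atTop (nhds 0) := by
    have hcc : Tendsto (fun _ : ℝ => c₄⁻¹) atTop (nhds c₄⁻¹) := tendsto_const_nhds
    have := ((h1lim.mul hcc).mul hulim2).mul_const M
    simpa using this
  have hevtail2 : ∀ᶠ T : ℝ in atTop,
      ((psiT β ψ f T 1)⁻¹ * c₄⁻¹ * (T ^ (-(1/β))) ^ (β' - 1)) * M ≤ ε / 2 :=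
    htailb.eventually_le_const (by positivity)
  -- pointwise tail comparison
  have htailcmp : ∀ T : ℝ, 1 ≤ T → T ^ (-(1/β)) ≤ s₁ →
      ((T * (f (T ^ (1/β)))⁻¹)⁻¹ * (T ^ (-(1/β)))⁻¹) * M ≤
        ((psiT β ψ f T 1)⁻¹ * c₄⁻¹ * (T ^ (-(1/β))) ^ (β' - 1)) * M := by
    intro T hT1 hus₁
    have hT0 : (0:ℝ) < T := by linarith
    set u : ℝ := T ^ (-(1/β)) with hudef
    have hu : 0 < u := Real.rpow_pos_of_pos hT0 _
    set aT : ℝ := (T * (f (T ^ (1/β)))⁻¹)⁻¹ with haTdef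
    have haT : 0 < aT := by
      have := hf_pos (T ^ (1/β)) (Real.rpow_pos_of_pos hT0 _)
      rw [haTdef]
      positivity
    have hψu : 0 < ψ u := hψ_pos _ hu.ne'
    -- lower bound on (ψ u)⁻¹ * u ^ β'
    have hge : c₄ ≤ (ψ u)⁻¹ * u ^ β' := by
      have h := hmono u s₁ hu hus₁ le_rfl
      rw [hc₄def]
      calc Real.exp (-δ) * ((ψ s₁)⁻¹ * s₁ ^ β')
          ≤ Real.exp (-δ) * (Real.exp δ * ((ψ u)⁻¹ * u ^ β')) :=
            mul_le_mul_of_nonneg_left h (Real.exp_pos _).le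
        _ = (ψ u)⁻¹ * u ^ β' := by
            rw [← mul_assoc, ← Real.exp_add, neg_add_cancel, Real.exp_zero, one_mul]
    -- hence u⁻¹ ≤ (ψ u)⁻¹ * c₄⁻¹ * u ^ (β' - 1)
    have hscalar : u⁻¹ ≤ (ψ u)⁻¹ * c₄⁻¹ * u ^ (β' - 1) := by
      have hei : (ψ u)⁻¹ * c₄⁻¹ * u ^ (β' - 1) =
          (((ψ u)⁻¹ * u ^ β') * c₄⁻¹) * u ^ (-1 : ℝ) := by
        rw [show (((ψ u)⁻¹ * u ^ β') * c₄⁻¹) * u ^ (-1:ℝ) =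
          ((ψ u)⁻¹ * c₄⁻¹) * (u ^ β' * u ^ (-1:ℝ)) by ring, ← Real.rpow_add hu]
        rw [show β' + (-1:ℝ) = β' - 1 by ring]
      rw [hei]
      have h1 : c₄ * c₄⁻¹ ≤ ((ψ u)⁻¹ * u ^ β') * c₄⁻¹ :=
        mul_le_mul_of_nonneg_right hge (inv_nonneg.2 hc₄pos.le)
      rw [mul_inv_cancel₀ hc₄pos.ne'] at h1
      have h2 := mul_le_mul_of_nonneg_right h1 (Real.rpow_nonneg hu.le (-1:ℝ))
      rw [one_mul] at h2
      exact le_trans (le_of_eq (Real.rpow_neg_one u).symm) h2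
    have heq1 : (psiT β ψ f T 1)⁻¹ = aT * (ψ u)⁻¹ := by
      rw [psiT, mul_inv, one_mul, haTdef, hudef]
    refine mul_le_mul_of_nonneg_right ?_ hM0
    calc aT * u⁻¹ ≤ aT * ((ψ u)⁻¹ * c₄⁻¹ * u ^ (β' - 1)) :=
          mul_le_mul_of_nonneg_left hscalar haT.le
      _ = (psiT β ψ f T 1)⁻¹ * c₄⁻¹ * u ^ (β' - 1) := by rw [heq1]; ring
  -- combine all eventual statements
  have hev : ∀ᶠ T : ℝ in atTop,
      (∫ z in Ioi K, (psiT β ψ f T z)⁻¹) ≤ (C₂ + 1) * K ^ (1 - β) + ε := by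
    filter_upwards [eventually_ge_atTop (1:ℝ), hevsmall, hevK, hevtail2] with T hT1 hsm hKb' htl
    have hmain := main T hT1 hsm.1
    have htc := htailcmp T hT1 hsm.2
    have hKbnd : C₂ * K * (psiT β ψ f T K)⁻¹ ≤ C₂ * K * ((K ^ β)⁻¹ + ε') := by
      refine mul_le_mul_of_nonneg_left hKb' ?_
      positivity
    have hKpow : K ^ ((1:ℝ) - β) = K * (K ^ β)⁻¹ := by
      rw [Real.rpow_sub hK, Real.rpow_one, div_eq_mul_inv]
    have hKpow_pos : 0 < K ^ ((1:ℝ) - β) := Real.rpow_pos_of_pos hK _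
    have hεbound : C₂ * K * ε' ≤ ε / 2 := by
      have h0 : 0 < C₂ * K + 1 := by positivity
      have h1 : (C₂ * K + 1) * ε' = ε / 2 := by
        rw [hε'def]
        field_simp
      calc C₂ * K * ε' ≤ (C₂ * K + 1) * ε' := by nlinarith
        _ = ε / 2 := h1
    calc (∫ z in Ioi K, (psiT β ψ f T z)⁻¹)
        ≤ C₂ * K * (psiT β ψ f T K)⁻¹ +
          ((T * (f (T ^ (1/β)))⁻¹)⁻¹ * (T ^ (-(1/β)))⁻¹) * M := hmain
      _ ≤ C₂ * K * ((K ^ β)⁻¹ + ε') + ε / 2 := add_le_add hKbnd (le_trans htc htl)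
      _ = C₂ * (K * (K ^ β)⁻¹) + (C₂ * K * ε' + ε / 2) := by ring
      _ ≤ C₂ * (K * (K ^ β)⁻¹) + (ε / 2 + ε / 2) := by linarith
      _ = C₂ * K ^ ((1:ℝ) - β) + ε := by rw [hKpow]; ring
      _ ≤ (C₂ + 1) * K ^ ((1:ℝ) - β) + ε := by
          have := mul_le_mul_of_nonneg_right (show C₂ ≤ C₂ + 1 by linarith) hKpow_pos.le
          linarith
  rw [eventually_atTop] at hev
  obtain ⟨a, ha⟩ := hev
  refine ⟨max a 1, le_max_right _ _, fun T hT => ?_⟩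
  exact ha T (le_trans (le_max_left _ _) hT)
end

section
/- Assume in addition there exists κ ∈ (0,1) with ∫_1^∞ ψ(w)^{−κ} dw < ∞. Then there exist δ ∈ (0, 1 − 1/β), c₀ > 0 and T₀ ≥ 1 such that for all T ≥ T₀ and all t ∈ (0,1), ∫_0^t ∫_ℝ e^{−u·ψ_T(w)} dw du ≤ c₀·t^δ. -/
open MeasureTheory Filter Set

lemma exp_neg_le_rpow {k x : ℝ} (hk0 : 0 < k) (hk1 : k ≤ 1) (hx : 0 < x) :
    Real.exp (-x) ≤ x ^ (-k) := by
  rcases le_or_gt 1 x with h | h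
  · calc Real.exp (-x) = (Real.exp x)⁻¹ := Real.exp_neg x
    _ ≤ x⁻¹ := by
      apply inv_anti₀ hx
      linarith [Real.add_one_le_exp x]
    _ = x ^ (-1 : ℝ) := (Real.rpow_neg_one x).symm
    _ ≤ x ^ (-k) := Real.rpow_le_rpow_of_exponent_le h (by linarith)
  · calc Real.exp (-x) ≤ 1 := Real.exp_le_one_iff.mpr (by linarith)
    _ = x ^ (0:ℝ) := (Real.rpow_zero x).symm
    _ ≤ x ^ (-k) := Real.rpow_le_rpow_of_exponent_ge hx h.le (by linarith)

lemma psiT_nonneg (β : ℝ) (ψ f : ℝ → ℝ) (hψ_nonneg : ∀ z : ℝ, 0 ≤ ψ z)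
    (hf_pos : ∀ x > (0:ℝ), 0 < f x) {T : ℝ} (hT : 0 < T) (w : ℝ) :
    0 ≤ psiT β ψ f T w :=
  mul_nonneg (mul_nonneg hT.le
    (inv_nonneg.mpr (hf_pos _ (Real.rpow_pos_of_pos hT _)).le)) (hψ_nonneg _)

lemma uct (β : ℝ) (hβ0 : 0 < β) (ψ f : ℝ → ℝ) (hψ_meas : Measurable ψ)
    (hψ_nonneg : ∀ z : ℝ, 0 ≤ ψ z)
    (hf_pos : ∀ x > (0:ℝ), 0 < f x)
    (hstable : ∀ z : ℝ, z ≠ 0 →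
      Filter.Tendsto (fun T : ℝ => psiT β ψ f T z) Filter.atTop (nhds (|z| ^ β))) :
    ∃ T₁ : ℝ, 1 ≤ T₁ ∧ ∀ T, T₁ ≤ T → ∀ z ∈ Set.Icc (1:ℝ) 2, 1/2 ≤ psiT β ψ f T z := by
  by_contra hcon
  push_neg at hcon
  choose T hTge z hzmem hzlt using fun n : ℕ => hcon (max 1 (n:ℝ)) (le_max_left _ _)
  have hT1 : ∀ n, (1:ℝ) ≤ T n := fun n => le_trans (le_max_left _ _) (hTge n)
  have hTn : ∀ n : ℕ, (n:ℝ) ≤ T n := fun n => le_trans (le_max_right _ _) (hTge n)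
  have hTpos : ∀ n, (0:ℝ) < T n := fun n => lt_of_lt_of_le one_pos (hT1 n)
  have hz1 : ∀ n, 1 ≤ z n := fun n => (hzmem n).1
  have hz2 : ∀ n, z n ≤ 2 := fun n => (hzmem n).2
  have hzpos : ∀ n, 0 < z n := fun n => lt_of_lt_of_le one_pos (hz1 n)
  set s : ℕ → ℝ := fun n => Real.log (z n) with hsdef
  have hs0 : ∀ n, 0 ≤ s n := fun n => Real.log_nonneg (hz1 n)
  have hs1 : ∀ n, s n ≤ 1 := by
    intro n
    have h1 : Real.log (z n) ≤ Real.log 2 := Real.log_le_log (hzpos n) (hz2 n)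
    have := Real.log_two_lt_d9
    simp only [hsdef]
    linarith
  set Y : ℕ → ℝ := fun n => T n * Real.exp (-(β * s n)) with hYdef
  have hYpos : ∀ n, 0 < Y n := fun n => mul_pos (hTpos n) (Real.exp_pos _)
  have hYlow : ∀ n : ℕ, (n:ℝ) * Real.exp (-β) ≤ Y n := by
    intro n
    have hexp : Real.exp (-β) ≤ Real.exp (-(β * s n)) := by
      apply Real.exp_le_exp.mpr
      nlinarith [hs1 n, hs0 n]
    exact mul_le_mul (hTn n) hexp (Real.exp_pos _).le (hTpos n).le
  have hTtop : Tendsto T atTop atTop := tendsto_atTop_mono hTn tendsto_natCast_atTop_atTop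
  have hYtop : Tendsto Y atTop atTop :=
    tendsto_atTop_mono hYlow (Tendsto.atTop_mul_const (Real.exp_pos _) tendsto_natCast_atTop_atTop)
  -- pointwise convergence of the reparametrized families
  have hfam : ∀ (R : ℕ → ℝ), Tendsto R atTop atTop → ∀ x : ℝ,
      Tendsto (fun n => psiT β ψ f (R n) (Real.exp x)) atTop (nhds (Real.exp (β * x))) := by
    intro R hR x
    have h := (hstable (Real.exp x) (Real.exp_pos x).ne').comp hR
    have habs : |Real.exp x| ^ β = Real.exp (β * x) := by
      rw [abs_of_pos (Real.exp_pos x), Real.rpow_def_of_pos (Real.exp_pos x), Real.log_exp,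
        mul_comm]
    rw [habs] at h
    exact h
  have hmeas : ∀ (R : ℝ), StronglyMeasurable (fun x : ℝ => psiT β ψ f R (Real.exp x)) := by
    intro R
    apply Measurable.stronglyMeasurable
    simp only [psiT]
    exact (hψ_meas.comp ((Real.measurable_exp).mul_const _)).const_mul _
  have hgm : StronglyMeasurable (fun x : ℝ => Real.exp (β * x)) :=
    (Real.measurable_exp.comp (measurable_const.mul measurable_id)).stronglyMeasurable
  have hegorov : ∀ (R : ℕ → ℝ), Tendsto R atTop atTop → ∀ (A : Set ℝ), MeasurableSet A →
      volume A ≠ ⊤ →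
      ∃ t, t ⊆ A ∧ MeasurableSet t ∧ volume t ≤ ENNReal.ofReal (1/4) ∧
        TendstoUniformlyOn (fun n x => psiT β ψ f (R n) (Real.exp x))
          (fun x => Real.exp (β * x)) atTop (A \ t) := by
    intro R hR A hA hAfin
    exact MeasureTheory.tendstoUniformlyOn_of_ae_tendsto (fun n => hmeas (R n)) hgm
      hA hAfin (Filter.Eventually.of_forall (fun x _ => hfam R hR x)) (by norm_num)
  obtain ⟨t₁, ht₁A, ht₁m, ht₁v, hu₁⟩ := hegorov T hTtop (Icc 0 3) measurableSet_Icc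
    (isCompact_Icc.measure_lt_top).ne
  obtain ⟨t₂, ht₂A, ht₂m, ht₂v, hu₂⟩ := hegorov Y hYtop (Icc (-1) 3) measurableSet_Icc
    (isCompact_Icc.measure_lt_top).ne
  rw [Metric.tendstoUniformlyOn_iff] at hu₁ hu₂
  obtain ⟨N₁, hN₁⟩ := eventually_atTop.mp (hu₁ (1/10) (by norm_num))
  obtain ⟨N₂, hN₂⟩ := eventually_atTop.mp (hu₂ (1/10) (by norm_num))
  obtain ⟨N₃, hN₃⟩ := Metric.tendsto_atTop.mp (hfam Y hYtop 0) (1/10) (by norm_num)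
  set n := max N₁ (max N₂ N₃) with hndef
  -- find a good point x
  have hx_exists : ∃ x, (x ∈ Icc (0:ℝ) 3 \ t₁) ∧ (x - s n) ∈ Icc (-1:ℝ) 3 \ t₂ := by
    by_contra hve
    push_neg at hve
    have hsub : Icc (0:ℝ) 3 ⊆ t₁ ∪ (fun x => x + (-(s n))) ⁻¹' t₂ := by
      intro x hx
      by_cases hx1 : x ∈ t₁
      · exact Or.inl hx1
      · right
        have hmem : x - s n ∈ Icc (-1:ℝ) 3 := by
          constructor
          · have := hs1 n; have := hx.1; linarith
          · have := hs0 n; have := hx.2; linarith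
        have h2 := hve x ⟨hx, hx1⟩
        simp only [Set.mem_diff, not_and, not_not] at h2
        simpa [sub_eq_add_neg] using h2 hmem
    have hv : volume (Icc (0:ℝ) 3) ≤ volume t₁ + volume t₂ := by
      calc volume (Icc (0:ℝ) 3) ≤ volume (t₁ ∪ (fun x => x + (-(s n))) ⁻¹' t₂) :=
            measure_mono hsub
      _ ≤ volume t₁ + volume ((fun x => x + (-(s n))) ⁻¹' t₂) := measure_union_le _ _
      _ = volume t₁ + volume t₂ := by rw [measure_preimage_add_right]
    rw [Real.volume_Icc] at hv
    have h3 : (ENNReal.ofReal (3 - 0)) ≤ ENNReal.ofReal (1/4) + ENNReal.ofReal (1/4) :=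
      le_trans hv (add_le_add ht₁v ht₂v)
    rw [← ENNReal.ofReal_add (by norm_num) (by norm_num)] at h3
    rw [ENNReal.ofReal_le_ofReal_iff (by norm_num)] at h3
    norm_num at h3
  obtain ⟨x, hxE, hxE'⟩ := hx_exists
  have hxA : x ∈ Icc (0:ℝ) 3 := hxE.1
  -- the four quantities
  have hzexp : Real.exp (s n) = z n := Real.exp_log (hzpos n)
  have hYpow : (Y n) ^ (-(1/β)) = (T n) ^ (-(1/β)) * Real.exp (s n) := by
    have h1 : (0:ℝ) < Real.exp (-(β * s n)) := Real.exp_pos _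
    rw [hYdef]
    rw [Real.mul_rpow (hTpos n).le h1.le]
    congr 1
    rw [Real.rpow_def_of_pos h1, Real.log_exp]
    congr 1
    field_simp
  have harg1 : z n * (T n) ^ (-(1/β)) = 1 * (Y n) ^ (-(1/β)) := by
    rw [hYpow, one_mul, ← hzexp]; ring
  have harg2 : Real.exp (x - s n) * (Y n) ^ (-(1/β)) = Real.exp x * (T n) ^ (-(1/β)) := by
    rw [hYpow, show Real.exp (x - s n) * ((T n)^(-(1/β)) * Real.exp (s n))
        = (Real.exp (x - s n) * Real.exp (s n)) * (T n)^(-(1/β)) by ring,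
      ← Real.exp_add, sub_add_cancel]
  have hident : psiT β ψ f (T n) (z n) * psiT β ψ f (Y n) (Real.exp (x - s n))
      = psiT β ψ f (T n) (Real.exp x) * psiT β ψ f (Y n) (Real.exp 0) := by
    simp only [psiT]
    rw [harg1, harg2, Real.exp_zero]
    ring
  set X := Real.exp (β * x) with hXdef
  have hX1 : 1 ≤ X := by
    have : 0 ≤ β * x := mul_nonneg hβ0.le hxA.1
    have := Real.add_one_le_exp (β * x)
    simp only [hXdef]; linarith
  have hc_lb : X - 1/10 ≤ psiT β ψ f (T n) (Real.exp x) := by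
    have := hN₁ n (le_max_left _ _) x hxE
    rw [Real.dist_eq, abs_lt] at this
    linarith [this.2]
  have hb_ub : psiT β ψ f (Y n) (Real.exp (x - s n)) ≤ X + 1/10 := by
    have h1 := hN₂ n (le_trans (le_max_left _ _) (le_max_right N₁ _)) (x - s n) hxE'
    rw [Real.dist_eq, abs_lt] at h1
    have h2 : Real.exp (β * (x - s n)) ≤ X := by
      apply Real.exp_le_exp.mpr
      nlinarith [hs0 n]
    linarith [h1.1]
  have hd_lb : (9:ℝ)/10 ≤ psiT β ψ f (Y n) (Real.exp 0) := by
    have h1 := hN₃ n (le_trans (le_max_right _ _) (le_max_right N₁ _))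
    rw [Real.dist_eq, abs_lt] at h1
    have : Real.exp (β * 0) = 1 := by simp
    rw [this] at h1
    linarith [h1.1]
  have ha : psiT β ψ f (T n) (z n) < 1/2 := hzlt n
  have ha0 : 0 ≤ psiT β ψ f (T n) (z n) := psiT_nonneg β ψ f hψ_nonneg hf_pos (hTpos n) _
  have hb0 : 0 ≤ psiT β ψ f (Y n) (Real.exp (x - s n)) :=
    psiT_nonneg β ψ f hψ_nonneg hf_pos (hYpos n) _
  have h1 : psiT β ψ f (T n) (z n) * psiT β ψ f (Y n) (Real.exp (x - s n))
      ≤ (1/2) * (X + 1/10) := by nlinarith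
  have h2 : (X - 1/10) * (9/10) ≤ psiT β ψ f (T n) (Real.exp x) * psiT β ψ f (Y n) (Real.exp 0) := by
    nlinarith
  rw [hident] at h1
  nlinarith

set_option maxHeartbeats 2000000

/-- Under the standing context (`β ∈ (1,2)`, `ψ` measurable, even,
nonnegative, positive off `0`, stable normalization, `∫_1^∞ ψ⁻¹ < ∞`, `1/ψ` locally
integrable on `(0,∞)`), assume in addition there exists `κ ∈ (0,1)` with
`∫_1^∞ ψ(w)^{−κ} dw < ∞`. Then there exist `δ ∈ (0, 1 − 1/β)`, `c₀ > 0` and `T₀ ≥ 1`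
such that for all `T ≥ T₀` and all `t ∈ (0,1)`,
`∫_0^t ∫_ℝ e^{−u·ψ_T(w)} dw du ≤ c₀·t^δ`. -/
theorem stmt_6 (β : ℝ) (hβ : β ∈ Set.Ioo (1:ℝ) 2)
    (ψ f : ℝ → ℝ) (hψ_meas : Measurable ψ) (hψ_even : ∀ z : ℝ, ψ (-z) = ψ z)
    (hψ_nonneg : ∀ z : ℝ, 0 ≤ ψ z) (hψ_pos : ∀ z : ℝ, z ≠ 0 → 0 < ψ z)
    (hf_pos : ∀ x > (0:ℝ), 0 < f x)
    (hstable : ∀ z : ℝ, z ≠ 0 →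
      Filter.Tendsto (fun T : ℝ => psiT β ψ f T z) Filter.atTop (nhds (|z| ^ β)))
    (hint : IntegrableOn (fun z : ℝ => (ψ z)⁻¹) (Set.Ioi 1) volume)
    (hloc : ∀ a b : ℝ, 0 < a → IntegrableOn (fun z : ℝ => (ψ z)⁻¹) (Set.Icc a b) volume)
    (κ : ℝ) (hκ : κ ∈ Set.Ioo (0:ℝ) 1)
    (hκint : IntegrableOn (fun w : ℝ => (ψ w) ^ (-κ)) (Set.Ioi 1) volume) :
    ∃ δ ∈ Set.Ioo (0:ℝ) (1 - 1/β), ∃ c₀ > (0:ℝ), ∃ T₀ ≥ (1:ℝ), ∀ T ≥ T₀,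
      ∀ t ∈ Set.Ioo (0:ℝ) 1,
        (∫ u in Set.Ioc (0:ℝ) t, ∫ w : ℝ, Real.exp (-(u * psiT β ψ f T w))) ≤ c₀ * t ^ δ := by
  obtain ⟨hβ1, hβ2⟩ := hβ
  have hβ0 : (0:ℝ) < β := by linarith
  have hβinv : 0 < 1/β := by positivity
  have hβinv1 : 1/β < 1 := by rw [div_lt_one hβ0]; linarith
  -- exponents
  set κ₁ := max κ ((1 + 1/β)/2) with hκ₁def
  have hκ₁a : 1/β < κ₁ := lt_of_lt_of_le (by linarith) (le_max_right _ _)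
  have hκ₁1 : κ₁ < 1 := max_lt hκ.2 (by linarith)
  have hκ₁0 : 0 < κ₁ := lt_trans hβinv hκ₁a
  have hκκ₁ : κ ≤ κ₁ := le_max_left _ _
  have hβκ₁ : 1 < κ₁ * β := (div_lt_iff₀ hβ0).mp hκ₁a
  set ρ := (1/κ₁ + β)/2 with hρdef
  have hρ0 : 0 < ρ := by positivity
  have hρβ : ρ < β := by
    have h1 : 1/κ₁ < β := by rw [div_lt_iff₀ hκ₁0]; linarith
    rw [hρdef]; linarith
  have hρκ₁ : 1 < ρ * κ₁ := by
    have h1 : ρ * κ₁ = (1 + β * κ₁)/2 := by rw [hρdef]; field_simp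
    rw [h1]; linarith
  -- the normalizing factor
  set D : ℝ → ℝ := fun T => T * (f (T ^ (1/β)))⁻¹ with hDdef
  have hDpos : ∀ T, 0 < T → 0 < D T := fun T hT =>
    mul_pos hT (inv_pos.mpr (hf_pos _ (Real.rpow_pos_of_pos hT _)))
  have hpsiT_eq : ∀ T w, psiT β ψ f T w = D T * ψ (w * T ^ (-(1/β))) := fun T w => rfl
  -- limits along scale doubling
  have lim1 : Tendsto (fun T => psiT β ψ f T 1) atTop (nhds 1) := by
    have h := hstable 1 one_ne_zero
    simpa using h
  have h2βpos : (0:ℝ) < 2 ^ β := Real.rpow_pos_of_pos two_pos β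
  have lim2 : Tendsto (fun T => psiT β ψ f ((2:ℝ)^β * T) 2) atTop (nhds ((2:ℝ)^β)) := by
    have h1 := hstable 2 two_ne_zero
    have h2 : Tendsto (fun T : ℝ => (2:ℝ)^β * T) atTop atTop :=
      Tendsto.const_mul_atTop h2βpos tendsto_id
    have h3 := h1.comp h2
    have habs : |(2:ℝ)| = 2 := abs_of_pos two_pos
    rw [habs] at h3
    exact h3
  have hratio : Tendsto (fun T => psiT β ψ f ((2:ℝ)^β * T) 2 / psiT β ψ f T 1) atTop
      (nhds ((2:ℝ)^β)) := by
    have h := lim2.div lim1 one_ne_zero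
    simpa only [div_one, Pi.div_def] using h
  have h2ρβ : (2:ℝ)^ρ < 2^β := Real.rpow_lt_rpow_of_exponent_lt one_lt_two hρβ
  obtain ⟨S₁', hS₁'⟩ := eventually_atTop.mp
    ((hratio.eventually (eventually_gt_nhds h2ρβ)).and (eventually_ge_atTop 1))
  set S₁ := max S₁' 1 with hS₁def
  have hS₁1 : (1:ℝ) ≤ S₁ := le_max_right _ _
  have hstep : ∀ S, S₁ ≤ S → (2:ℝ)^ρ * D S ≤ D ((2:ℝ)^β * S) := by
    intro S hS
    have hS1 : (1:ℝ) ≤ S := le_trans hS₁1 hS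
    have hSpos : (0:ℝ) < S := lt_of_lt_of_le one_pos hS1
    obtain ⟨hgt, -⟩ := hS₁' S (le_trans (le_max_left _ _) hS)
    have hψS : (0:ℝ) < ψ (S ^ (-(1/β))) := hψ_pos _ (Real.rpow_pos_of_pos hSpos _).ne'
    have e1 : psiT β ψ f S 1 = D S * ψ (S ^ (-(1/β))) := by rw [hpsiT_eq, one_mul]
    have e2 : psiT β ψ f ((2:ℝ)^β * S) 2 = D ((2:ℝ)^β * S) * ψ (S ^ (-(1/β))) := by
      rw [hpsiT_eq]
      congr 2
      have hh : ((2:ℝ)^β) ^ (-(1/β)) = 2⁻¹ := by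
        rw [← Real.rpow_mul (by norm_num : (0:ℝ) ≤ 2),
          show β * (-(1/β)) = -1 by field_simp]
        exact Real.rpow_neg_one 2
      rw [Real.mul_rpow h2βpos.le hSpos.le, hh]
      ring
    rw [e1, e2, mul_div_mul_right _ _ hψS.ne'] at hgt
    have h := (lt_div_iff₀ (hDpos S hSpos)).mp hgt
    linarith
  have htel : ∀ k : ℕ, ∀ S, S₁ ≤ S → ((2:ℝ)^ρ)^k * D S ≤ D (((2:ℝ)^β)^k * S) := by
    intro k
    induction k with
    | zero => intro S hS; simp
    | succ k ih =>
      intro S hS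
      have hSpos : 0 < S := lt_of_lt_of_le (lt_of_lt_of_le one_pos hS₁1) hS
      have h2β1 : (1:ℝ) ≤ 2^β := by
        calc (1:ℝ) = 2^(0:ℝ) := (Real.rpow_zero 2).symm
        _ ≤ 2^β := Real.rpow_le_rpow_of_exponent_le one_le_two hβ0.le
      have hk1 : (1:ℝ) ≤ ((2:ℝ)^β)^k := one_le_pow₀ h2β1
      have hS' : S₁ ≤ ((2:ℝ)^β)^k * S := le_trans hS (le_mul_of_one_le_left hSpos.le hk1)
      have h1 := hstep (((2:ℝ)^β)^k * S) hS'
      have h2 := ih S hS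
      have h3 : (0:ℝ) ≤ (2:ℝ)^ρ := (Real.rpow_pos_of_pos two_pos ρ).le
      calc ((2:ℝ)^ρ)^(k+1) * D S = (2:ℝ)^ρ * (((2:ℝ)^ρ)^k * D S) := by ring
      _ ≤ (2:ℝ)^ρ * D (((2:ℝ)^β)^k * S) := mul_le_mul_of_nonneg_left h2 h3
      _ ≤ D ((2:ℝ)^β * (((2:ℝ)^β)^k * S)) := h1
      _ = D (((2:ℝ)^β)^(k+1) * S) := by rw [← mul_assoc, ← pow_succ']
  -- uniform lower bound on [1,2]
  obtain ⟨T₁, hT₁1, huct⟩ := uct β hβ0 ψ f hψ_meas hψ_nonneg hf_pos hstable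
  set T₂ := max S₁ T₁ with hT₂def
  have hT₂1 : (1:ℝ) ≤ T₂ := le_trans hT₁1 (le_max_right _ _)
  have hT₂pos : (0:ℝ) < T₂ := lt_of_lt_of_le one_pos hT₂1
  set a₀ := T₂ ^ (-(1/β)) with ha₀def
  have ha₀pos : 0 < a₀ := Real.rpow_pos_of_pos hT₂pos _
  have ha₀le1 : a₀ ≤ 1 := Real.rpow_le_one_of_one_le_of_nonpos hT₂1 (by linarith)
  have hψa₀ : 0 < ψ a₀ := hψ_pos _ ha₀pos.ne'
  have hDband : ∀ S, T₂ ≤ S → S ≤ 2^β * T₂ → (2 * ψ a₀)⁻¹ ≤ D S := by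
    intro S hS hS2
    have hSpos : 0 < S := lt_of_lt_of_le hT₂pos hS
    have hdiv1 : (1:ℝ) ≤ S/T₂ := (one_le_div hT₂pos).mpr hS
    set zz := (S/T₂) ^ (1/β) with hzzdef
    have hz1 : 1 ≤ zz := by
      calc (1:ℝ) = 1 ^ (1/β) := (Real.one_rpow _).symm
      _ ≤ zz := Real.rpow_le_rpow zero_le_one hdiv1 (by positivity)
    have hz2 : zz ≤ 2 := by
      have h1 : S / T₂ ≤ 2^β := by rw [div_le_iff₀ hT₂pos]; linarith [hS2]
      calc zz ≤ ((2:ℝ)^β) ^ (1/β) := Real.rpow_le_rpow (by positivity) h1 (by positivity)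
      _ = 2 := by
          rw [← Real.rpow_mul (by norm_num : (0:ℝ) ≤ 2), show β * (1/β) = 1 by field_simp,
            Real.rpow_one]
    have harg : zz * S ^ (-(1/β)) = a₀ := by
      rw [hzzdef, Real.div_rpow hSpos.le hT₂pos.le, ha₀def,
        Real.rpow_neg hSpos.le, Real.rpow_neg hT₂pos.le]
      have h1 : S ^ (1/β) ≠ 0 := (Real.rpow_pos_of_pos hSpos _).ne'
      have h2 : T₂ ^ (1/β) ≠ 0 := (Real.rpow_pos_of_pos hT₂pos _).ne'
      field_simp
    have huse := huct S (le_trans (le_max_right _ _) hS) zz ⟨hz1, hz2⟩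
    rw [hpsiT_eq, harg] at huse
    calc (2 * ψ a₀)⁻¹ = (1/2)/(ψ a₀) := by rw [mul_inv]; ring
    _ ≤ D S := (div_le_iff₀ hψa₀).mpr huse
  -- pointwise lower bound for psiT in the bulk
  set c₄ : ℝ := 2⁻¹ * (2:ℝ)^(-ρ) with hc₄def
  have hc₄pos : 0 < c₄ := by positivity
  have key1 : ∀ T, T₂ ≤ T → ∀ w, 1 ≤ w → w ≤ (T/T₂)^(1/β) → c₄ * w^ρ ≤ psiT β ψ f T w := by
    intro T hT w hw1 hwW
    have hTpos : 0 < T := lt_of_lt_of_le hT₂pos hT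
    have hwpos : 0 < w := lt_of_lt_of_le one_pos hw1
    set k := ⌊Real.logb 2 w⌋₊ with hkdef
    have hlogb0 : 0 ≤ Real.logb 2 w := Real.logb_nonneg one_lt_two hw1
    have h2k : (2:ℝ)^(k:ℝ) ≤ w := by
      have h1 : (k:ℝ) ≤ Real.logb 2 w := Nat.floor_le hlogb0
      calc (2:ℝ)^(k:ℝ) ≤ 2 ^ Real.logb 2 w := Real.rpow_le_rpow_of_exponent_le one_le_two h1
      _ = w := Real.rpow_logb two_pos (by norm_num) hwpos
    have hk2 : w < (2:ℝ)^((k:ℝ)+1) := by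
      have h1 : Real.logb 2 w < (k:ℝ) + 1 := Nat.lt_floor_add_one _
      calc w = 2 ^ Real.logb 2 w := (Real.rpow_logb two_pos (by norm_num) hwpos).symm
      _ < _ := Real.rpow_lt_rpow_of_exponent_lt one_lt_two h1
    have hpowk : (((2:ℝ)^β)^k : ℝ) = (2:ℝ)^(β*(k:ℝ)) := by
      rw [← Real.rpow_natCast ((2:ℝ)^β) k, ← Real.rpow_mul (by norm_num : (0:ℝ) ≤ 2)]
    have hpowk2 : ((2:ℝ)^(k:ℝ))^β = (2:ℝ)^(β*(k:ℝ)) := by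
      rw [← Real.rpow_mul (by norm_num : (0:ℝ) ≤ 2), mul_comm]
    have hWβ : ((T/T₂)^(1/β))^β = T/T₂ := by
      rw [← Real.rpow_mul (by positivity), show (1/β)*β = 1 by field_simp, Real.rpow_one]
    have hkT : ((2:ℝ)^β)^k ≤ T/T₂ := by
      calc ((2:ℝ)^β)^k = ((2:ℝ)^(k:ℝ))^β := by rw [hpowk, hpowk2]
      _ ≤ ((T/T₂)^(1/β))^β := Real.rpow_le_rpow (by positivity) (le_trans h2k hwW) hβ0.le
      _ = T/T₂ := hWβ
    set S := T / ((2:ℝ)^β)^k with hSdef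
    have hpk_pos : (0:ℝ) < ((2:ℝ)^β)^k := by positivity
    have hST₂ : T₂ ≤ S := by
      rw [hSdef, le_div_iff₀ hpk_pos]
      have h := (le_div_iff₀ hT₂pos).mp hkT
      calc T₂ * ((2:ℝ)^β)^k = ((2:ℝ)^β)^k * T₂ := mul_comm _ _
      _ ≤ T := h
    have hSpos : 0 < S := lt_of_lt_of_le hT₂pos hST₂
    have hS₁S : S₁ ≤ S := le_trans (le_max_left _ _) hST₂
    set zz := w / (2:ℝ)^(k:ℝ) with hzzdef
    have h2kpos : (0:ℝ) < (2:ℝ)^(k:ℝ) := by positivity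
    have hz1 : 1 ≤ zz := (one_le_div h2kpos).mpr h2k
    have hz2 : zz ≤ 2 := by
      rw [hzzdef, div_le_iff₀ h2kpos]
      have h1 : (2:ℝ)^((k:ℝ)+1) = 2 * (2:ℝ)^(k:ℝ) := by
        rw [Real.rpow_add two_pos, Real.rpow_one]; ring
      linarith [hk2, h1 ▸ hk2]
    have hSarg : w * T ^ (-(1/β)) = zz * S ^ (-(1/β)) := by
      have hh : S ^ (-(1/β)) = T ^ (-(1/β)) * (2:ℝ)^(k:ℝ) := by
        rw [hSdef, Real.div_rpow hTpos.le hpk_pos.le, hpowk,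
          ← Real.rpow_mul (by norm_num : (0:ℝ) ≤ 2),
          show β*(k:ℝ) * (-(1/β)) = -(k:ℝ) by field_simp,
          Real.rpow_neg (by norm_num : (0:ℝ) ≤ 2), div_eq_mul_inv, inv_inv]
      rw [hh, hzzdef]
      field_simp
    have harg2 : psiT β ψ f T w = D T * ψ (zz * S ^ (-(1/β))) := by
      rw [hpsiT_eq, hSarg]
    have hDT : D T = D (((2:ℝ)^β)^k * S) := by
      congr 1
      rw [hSdef]
      field_simp
    have htelk := htel k S hS₁S
    have hψarg : 0 ≤ ψ (zz * S ^ (-(1/β))) := hψ_nonneg _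
    have huct' := huct S (le_trans (le_max_right _ _) hST₂) zz ⟨hz1, hz2⟩
    rw [hpsiT_eq] at huct'
    have hchain : ((2:ℝ)^ρ)^k * (1/2) ≤ psiT β ψ f T w := by
      calc ((2:ℝ)^ρ)^k * (1/2) ≤ ((2:ℝ)^ρ)^k * (D S * ψ (zz * S ^ (-(1/β)))) :=
            mul_le_mul_of_nonneg_left huct' (by positivity)
      _ = (((2:ℝ)^ρ)^k * D S) * ψ (zz * S ^ (-(1/β))) := by ring
      _ ≤ D (((2:ℝ)^β)^k * S) * ψ (zz * S ^ (-(1/β))) := mul_le_mul_of_nonneg_right htelk hψarg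
      _ = psiT β ψ f T w := by rw [harg2, hDT]
    have h2ρpos : (0:ℝ) < (2:ℝ)^ρ := by positivity
    have hwρ : w^ρ * (2:ℝ)^(-ρ) ≤ ((2:ℝ)^ρ)^k := by
      have h1 : w^ρ ≤ ((2:ℝ)^((k:ℝ)+1))^ρ := Real.rpow_le_rpow hwpos.le hk2.le hρ0.le
      have h2 : ((2:ℝ)^((k:ℝ)+1))^ρ = ((2:ℝ)^ρ)^k * (2:ℝ)^ρ := by
        rw [← Real.rpow_natCast ((2:ℝ)^ρ) k, ← Real.rpow_mul (by norm_num : (0:ℝ) ≤ 2),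
          ← Real.rpow_mul (by norm_num : (0:ℝ) ≤ 2), ← Real.rpow_add two_pos]
        congr 1
        ring
      rw [h2] at h1
      rw [Real.rpow_neg (by norm_num : (0:ℝ) ≤ 2), ← div_eq_mul_inv, div_le_iff₀ h2ρpos]
      exact h1
    calc c₄ * w^ρ = (w^ρ * (2:ℝ)^(-ρ)) * (1/2) := by rw [hc₄def]; ring
    _ ≤ ((2:ℝ)^ρ)^k * (1/2) := mul_le_mul_of_nonneg_right hwρ (by norm_num)
    _ ≤ psiT β ψ f T w := hchain
  -- lower bound for D
  set c₃ : ℝ := (2 * ψ a₀)⁻¹ * (2:ℝ)^(-ρ) * T₂ ^ (-(ρ/β)) with hc₃def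
  have hc₃pos : 0 < c₃ := by positivity
  have hDlow : ∀ T, T₂ ≤ T → c₃ * T ^ (ρ/β) ≤ D T := by
    intro T hT
    have hTpos : 0 < T := lt_of_lt_of_le hT₂pos hT
    have hdiv1 : (1:ℝ) ≤ T/T₂ := (one_le_div hT₂pos).mpr hT
    have hdivpos : (0:ℝ) < T/T₂ := by positivity
    set w := (T/T₂)^(1/β) with hwdef
    have hw1 : 1 ≤ w := by
      calc (1:ℝ) = 1^(1/β) := (Real.one_rpow _).symm
      _ ≤ w := Real.rpow_le_rpow zero_le_one hdiv1 (by positivity)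
    have hwpos : 0 < w := lt_of_lt_of_le one_pos hw1
    set k := ⌊Real.logb 2 w⌋₊ with hkdef
    have hlogb0 : 0 ≤ Real.logb 2 w := Real.logb_nonneg one_lt_two hw1
    have h2k : (2:ℝ)^(k:ℝ) ≤ w := by
      have h1 : (k:ℝ) ≤ Real.logb 2 w := Nat.floor_le hlogb0
      calc (2:ℝ)^(k:ℝ) ≤ 2 ^ Real.logb 2 w := Real.rpow_le_rpow_of_exponent_le one_le_two h1
      _ = w := Real.rpow_logb two_pos (by norm_num) hwpos
    have hk2 : w < (2:ℝ)^((k:ℝ)+1) := by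
      have h1 : Real.logb 2 w < (k:ℝ) + 1 := Nat.lt_floor_add_one _
      calc w = 2 ^ Real.logb 2 w := (Real.rpow_logb two_pos (by norm_num) hwpos).symm
      _ < _ := Real.rpow_lt_rpow_of_exponent_lt one_lt_two h1
    have hpowk : (((2:ℝ)^β)^k : ℝ) = (2:ℝ)^(β*(k:ℝ)) := by
      rw [← Real.rpow_natCast ((2:ℝ)^β) k, ← Real.rpow_mul (by norm_num : (0:ℝ) ≤ 2)]
    have hpowk2 : ((2:ℝ)^(k:ℝ))^β = (2:ℝ)^(β*(k:ℝ)) := by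
      rw [← Real.rpow_mul (by norm_num : (0:ℝ) ≤ 2), mul_comm]
    have hWβ : w^β = T/T₂ := by
      rw [hwdef, ← Real.rpow_mul (by positivity), show (1/β)*β = 1 by field_simp, Real.rpow_one]
    have hkT : ((2:ℝ)^β)^k ≤ T/T₂ := by
      calc ((2:ℝ)^β)^k = ((2:ℝ)^(k:ℝ))^β := by rw [hpowk, hpowk2]
      _ ≤ w^β := Real.rpow_le_rpow (by positivity) h2k hβ0.le
      _ = T/T₂ := hWβ
    set S := T / ((2:ℝ)^β)^k with hSdef
    have hpk_pos : (0:ℝ) < ((2:ℝ)^β)^k := by positivity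
    have hST₂ : T₂ ≤ S := by
      rw [hSdef, le_div_iff₀ hpk_pos]
      have h := (le_div_iff₀ hT₂pos).mp hkT
      calc T₂ * ((2:ℝ)^β)^k = ((2:ℝ)^β)^k * T₂ := mul_comm _ _
      _ ≤ T := h
    have hSup : S ≤ 2^β * T₂ := by
      rw [hSdef, div_le_iff₀ hpk_pos]
      have h1 : T/T₂ < ((2:ℝ)^β)^(k+1) := by
        calc T/T₂ = w^β := hWβ.symm
        _ < ((2:ℝ)^((k:ℝ)+1))^β := Real.rpow_lt_rpow hwpos.le hk2 hβ0
        _ = ((2:ℝ)^β)^(k+1) := by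
            rw [← Real.rpow_natCast ((2:ℝ)^β) (k+1), ← Real.rpow_mul (by norm_num : (0:ℝ) ≤ 2),
              ← Real.rpow_mul (by norm_num : (0:ℝ) ≤ 2)]
            congr 1
            push_cast
            ring
      have h2 := (div_lt_iff₀ hT₂pos).mp h1
      calc T ≤ ((2:ℝ)^β)^(k+1) * T₂ := h2.le
      _ = 2^β * T₂ * ((2:ℝ)^β)^k := by ring
    have hDS := hDband S hST₂ hSup
    have htelk := htel k S (le_trans (le_max_left _ _) hST₂)
    have hDT : D T = D (((2:ℝ)^β)^k * S) := by
      congr 1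
      rw [hSdef]
      field_simp
    have h2ρpos : (0:ℝ) < (2:ℝ)^ρ := by positivity
    have hwρ : w^ρ * (2:ℝ)^(-ρ) ≤ ((2:ℝ)^ρ)^k := by
      have h1 : w^ρ ≤ ((2:ℝ)^((k:ℝ)+1))^ρ := Real.rpow_le_rpow hwpos.le hk2.le hρ0.le
      have h2 : ((2:ℝ)^((k:ℝ)+1))^ρ = ((2:ℝ)^ρ)^k * (2:ℝ)^ρ := by
        rw [← Real.rpow_natCast ((2:ℝ)^ρ) k, ← Real.rpow_mul (by norm_num : (0:ℝ) ≤ 2),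
          ← Real.rpow_mul (by norm_num : (0:ℝ) ≤ 2), ← Real.rpow_add two_pos]
        congr 1
        ring
      rw [h2] at h1
      rw [Real.rpow_neg (by norm_num : (0:ℝ) ≤ 2), ← div_eq_mul_inv, div_le_iff₀ h2ρpos]
      exact h1
    have hwρβ : w^ρ = T^(ρ/β) * T₂^(-(ρ/β)) := by
      rw [hwdef, ← Real.rpow_mul hdivpos.le, show (1/β)*ρ = ρ/β by ring,
        Real.div_rpow hTpos.le hT₂pos.le, Real.rpow_neg hT₂pos.le, div_eq_mul_inv]
    calc c₃ * T^(ρ/β) = (w^ρ * (2:ℝ)^(-ρ)) * (2*ψ a₀)⁻¹ := by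
          rw [hc₃def, hwρβ]; ring
    _ ≤ ((2:ℝ)^ρ)^k * (2*ψ a₀)⁻¹ := mul_le_mul_of_nonneg_right hwρ (by positivity)
    _ ≤ ((2:ℝ)^ρ)^k * D S := mul_le_mul_of_nonneg_left hDS (by positivity)
    _ ≤ D (((2:ℝ)^β)^k * S) := htelk
    _ = D T := hDT.symm
  -- integrability of ψ^(-κ₁) away from 0
  have hκ₁meas : Measurable (fun v : ℝ => ψ v ^ (-κ₁)) := hψ_meas.pow measurable_const
  have hMint : IntegrableOn (fun v : ℝ => ψ v ^ (-κ₁)) (Ioi a₀) volume := by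
    have h1 : IntegrableOn (fun v : ℝ => ψ v ^ (-κ₁)) (Icc a₀ 1) volume := by
      have h2 : IntegrableOn (fun v : ℝ => (ψ v)⁻¹ + 1) (Icc a₀ 1) volume :=
        (hloc a₀ 1 ha₀pos).add ((integrableOn_const_iff).mpr (Or.inr (by
          rw [Real.volume_Icc]; exact ENNReal.ofReal_lt_top)))
      apply Integrable.mono' h2 hκ₁meas.aestronglyMeasurable
      filter_upwards [ae_restrict_mem measurableSet_Icc] with v hv
      have hv0 : 0 < v := lt_of_lt_of_le ha₀pos hv.1
      have hψv : 0 < ψ v := hψ_pos v hv0.ne'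
      rw [Real.norm_eq_abs, abs_of_nonneg (Real.rpow_nonneg hψv.le _)]
      rcases le_or_gt 1 (ψ v) with h | h
      · have h3 : ψ v ^ (-κ₁) ≤ 1 := Real.rpow_le_one_of_one_le_of_nonpos h (by linarith)
        have h4 : 0 ≤ (ψ v)⁻¹ := by positivity
        linarith
      · have h3 : ψ v ^ (-κ₁) ≤ ψ v ^ (-1:ℝ) :=
          Real.rpow_le_rpow_of_exponent_ge hψv h.le (by linarith)
        rw [Real.rpow_neg_one] at h3
        linarith
    have h2 : IntegrableOn (fun v : ℝ => ψ v ^ (-κ₁)) (Ioi 1) volume := by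
      apply Integrable.mono' (hκint.add hint) hκ₁meas.aestronglyMeasurable
      filter_upwards [ae_restrict_mem measurableSet_Ioi] with v hv
      simp only [Pi.add_apply]
      have hv0 : (0:ℝ) < v := lt_trans one_pos hv
      have hψv : 0 < ψ v := hψ_pos v hv0.ne'
      rw [Real.norm_eq_abs, abs_of_nonneg (Real.rpow_nonneg hψv.le _)]
      rcases le_or_gt 1 (ψ v) with h | h
      · have h3 : ψ v ^ (-κ₁) ≤ ψ v ^ (-κ) :=
          Real.rpow_le_rpow_of_exponent_le h (by linarith)
        have h4 : 0 ≤ (ψ v)⁻¹ := by positivity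
        linarith
      · have h3 : ψ v ^ (-κ₁) ≤ (ψ v)⁻¹ := by
          have h5 := Real.rpow_le_rpow_of_exponent_ge hψv h.le
            (show (-1:ℝ) ≤ -κ₁ by linarith)
          rwa [Real.rpow_neg_one] at h5
        have h4 : 0 ≤ ψ v ^ (-κ) := Real.rpow_nonneg hψv.le _
        linarith
    have hsub : Ioi a₀ ⊆ Icc a₀ 1 ∪ Ioi 1 := by
      intro v hv
      rcases le_or_gt v 1 with h | h
      · exact Or.inl ⟨le_of_lt hv, h⟩
      · exact Or.inr h
    exact ((h1.union h2).mono_set hsub)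
  set M := ∫ v in Ioi a₀, ψ v ^ (-κ₁) with hMdef
  have hM0 : 0 ≤ M :=
    setIntegral_nonneg measurableSet_Ioi (fun v _ => Real.rpow_nonneg (hψ_nonneg v) _)
  -- constants
  set V₂ : ℝ := (ρ * κ₁ - 1)⁻¹ with hV₂def
  have hV₂pos : 0 < V₂ := inv_pos.mpr (by linarith)
  set C₇ : ℝ := 2*(1 + c₄^(-κ₁) * V₂ + c₃^(-κ₁) * M) with hC₇def
  have hC₇pos : 0 < C₇ := by
    have h1 : 0 ≤ c₄^(-κ₁) * V₂ := mul_nonneg (Real.rpow_nonneg hc₄pos.le _) hV₂pos.le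
    have h2 : 0 ≤ c₃^(-κ₁) * M := mul_nonneg (Real.rpow_nonneg hc₃pos.le _) hM0
    rw [hC₇def]
    linarith
  -- the inner bound
  have inner : ∀ T, T₂ ≤ T → ∀ u : ℝ, 0 < u → u ≤ 1 →
      (∫ w : ℝ, Real.exp (-(u * psiT β ψ f T w))) ≤ C₇ * u ^ (-κ₁) := by
    intro T hT u hu hu1
    have hTpos : 0 < T := lt_of_lt_of_le hT₂pos hT
    have hT1 : (1:ℝ) ≤ T := le_trans hT₂1 hT
    have hdiv1 : (1:ℝ) ≤ T/T₂ := (one_le_div hT₂pos).mpr hT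
    set W := (T/T₂)^(1/β) with hWdef
    have hW1 : 1 ≤ W := by
      calc (1:ℝ) = 1^(1/β) := (Real.one_rpow _).symm
      _ ≤ W := Real.rpow_le_rpow zero_le_one hdiv1 (by positivity)
    set cc := T ^ (-(1/β)) with hccdef
    have hccpos : 0 < cc := Real.rpow_pos_of_pos hTpos _
    have hDT := hDpos T hTpos
    have hWcc : W * cc = a₀ := by
      rw [hWdef, hccdef, ha₀def, Real.div_rpow hTpos.le hT₂pos.le,
        Real.rpow_neg hTpos.le, Real.rpow_neg hT₂pos.le]
      have h1 : T ^ (1/β) ≠ 0 := (Real.rpow_pos_of_pos hTpos _).ne'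
      have h2 : T₂ ^ (1/β) ≠ 0 := (Real.rpow_pos_of_pos hT₂pos _).ne'
      field_simp
    set G₁ : ℝ → ℝ := (Ioc (0:ℝ) 1).indicator (fun _ => (1:ℝ)) with hG₁def
    set G₂ : ℝ → ℝ := (Ioi (1:ℝ)).indicator (fun w => (u*c₄)^(-κ₁) * w^(-(ρ*κ₁))) with hG₂def
    set G₃ : ℝ → ℝ := (Ioi W).indicator (fun w => (u * D T)^(-κ₁) * ψ (w * cc)^(-κ₁)) with hG₃def
    have hint1 : Integrable G₁ volume :=
      (integrable_indicator_iff measurableSet_Ioc).mpr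
        ((integrableOn_const_iff).mpr (Or.inr (by rw [Real.volume_Ioc]; exact ENNReal.ofReal_lt_top)))
    have hexplt : -(ρ*κ₁) < -1 := by linarith
    have hint2 : Integrable G₂ volume :=
      (integrable_indicator_iff measurableSet_Ioi).mpr
        ((integrableOn_Ioi_rpow_of_lt hexplt one_pos).const_mul _)
    have hint3' : IntegrableOn (fun w : ℝ => ψ (w * cc) ^ (-κ₁)) (Ioi W) volume := by
      have h := (integrableOn_Ioi_comp_mul_right_iff (fun v : ℝ => ψ v ^ (-κ₁)) W hccpos).mpr
      rw [hWcc] at h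
      exact h hMint
    have hint3 : Integrable G₃ volume :=
      (integrable_indicator_iff measurableSet_Ioi).mpr (hint3'.const_mul _)
    have hint12 : Integrable (fun w => G₁ w + G₂ w) volume := hint1.add hint2
    have hGint : Integrable (fun w => G₁ w + G₂ w + G₃ w) volume := hint12.add hint3
    have hGneg : Integrable (fun w => G₁ (-w) + G₂ (-w) + G₃ (-w)) volume := hGint.comp_neg
    have hG₁nn : ∀ w, 0 ≤ G₁ w := fun w => Set.indicator_nonneg (fun _ _ => zero_le_one) w
    have hG₂nn : ∀ w, 0 ≤ G₂ w := fun w => Set.indicator_nonneg (fun x hx => by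
      have : (0:ℝ) < x := lt_trans one_pos hx
      positivity) w
    have hG₃nn : ∀ w, 0 ≤ G₃ w := fun w => Set.indicator_nonneg (fun x _ =>
      mul_nonneg (Real.rpow_nonneg (by positivity) _) (Real.rpow_nonneg (hψ_nonneg _) _)) w
    have hGnn : ∀ w, 0 ≤ G₁ w + G₂ w + G₃ w := fun w =>
      add_nonneg (add_nonneg (hG₁nn w) (hG₂nn w)) (hG₃nn w)
    -- pointwise bound for positive w
    have hpos : ∀ w : ℝ, 0 < w →
        Real.exp (-(u * psiT β ψ f T w)) ≤ G₁ w + G₂ w + G₃ w := by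
      intro w hw
      have hpsinn : 0 ≤ psiT β ψ f T w := by
        rw [hpsiT_eq]
        exact mul_nonneg hDT.le (hψ_nonneg _)
      have hpsipos : 0 < psiT β ψ f T w := by
        rw [hpsiT_eq]
        exact mul_pos hDT (hψ_pos _ (mul_pos hw hccpos).ne')
      rcases le_or_gt w 1 with h1 | h1
      · have hF1 : Real.exp (-(u * psiT β ψ f T w)) ≤ 1 := by
          rw [Real.exp_le_one_iff]
          exact neg_nonpos.mpr (mul_nonneg hu.le hpsinn)
        have hi1 : G₁ w = 1 := by
          rw [hG₁def]; exact Set.indicator_of_mem (Set.mem_Ioc.mpr ⟨hw, h1⟩) _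
        have := hG₂nn w; have := hG₃nn w
        linarith
      rcases le_or_gt w W with h2 | h2
      · have hk1 := key1 T hT w h1.le h2
        have hF : Real.exp (-(u * psiT β ψ f T w)) ≤ (u*c₄)^(-κ₁) * w^(-(ρ*κ₁)) := by
          have hc₄w : 0 < u * (c₄ * w^ρ) := by positivity
          calc Real.exp (-(u * psiT β ψ f T w)) ≤ (u * psiT β ψ f T w)^(-κ₁) :=
                exp_neg_le_rpow hκ₁0 hκ₁1.le (mul_pos hu hpsipos)
          _ ≤ (u * (c₄ * w^ρ))^(-κ₁) :=
                Real.rpow_le_rpow_of_nonpos hc₄w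
                  (mul_le_mul_of_nonneg_left hk1 hu.le) (by linarith)
          _ = (u*c₄)^(-κ₁) * w^(-(ρ*κ₁)) := by
                rw [show u * (c₄ * w^ρ) = (u*c₄) * w^ρ by ring,
                  Real.mul_rpow (by positivity) (by positivity),
                  ← Real.rpow_mul hw.le, show ρ * (-κ₁) = -(ρ*κ₁) by ring]
        have hi2 : G₂ w = (u*c₄)^(-κ₁) * w^(-(ρ*κ₁)) := by
          rw [hG₂def]; exact Set.indicator_of_mem h1 _
        have := hG₁nn w; have := hG₃nn w
        linarith
      · have hF : Real.exp (-(u * psiT β ψ f T w)) ≤ (u * D T)^(-κ₁) * ψ (w*cc)^(-κ₁) := by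
          calc Real.exp (-(u * psiT β ψ f T w)) ≤ (u * psiT β ψ f T w)^(-κ₁) :=
                exp_neg_le_rpow hκ₁0 hκ₁1.le (mul_pos hu hpsipos)
          _ = (u * D T)^(-κ₁) * ψ (w*cc)^(-κ₁) := by
                rw [hpsiT_eq, show u * (D T * ψ (w * cc)) = (u * D T) * ψ (w*cc) by ring,
                  Real.mul_rpow (by positivity) (hψ_nonneg _)]
        have hi3 : G₃ w = (u * D T)^(-κ₁) * ψ (w*cc)^(-κ₁) := by
          rw [hG₃def]; exact Set.indicator_of_mem h2 _
        have := hG₁nn w; have := hG₂nn w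
        linarith
    -- a.e. pointwise bound
    have hFbound : ∀ᵐ w : ℝ, Real.exp (-(u * psiT β ψ f T w))
        ≤ (G₁ w + G₂ w + G₃ w) + (G₁ (-w) + G₂ (-w) + G₃ (-w)) := by
      have h0 : ∀ᵐ w : ℝ, w ≠ (0:ℝ) := by
        have he : {w : ℝ | ¬ w ≠ 0} = {0} := by ext w; simp
        rw [ae_iff, he]
        exact measure_singleton 0
      filter_upwards [h0] with w hw0
      rcases lt_trichotomy w 0 with hneg | hzero | hposw
      · have heven : psiT β ψ f T w = psiT β ψ f T (-w) := by
          rw [hpsiT_eq, hpsiT_eq]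
          congr 1
          rw [show -w * cc = -(w * cc) by ring, hψ_even]
        calc Real.exp (-(u * psiT β ψ f T w))
            = Real.exp (-(u * psiT β ψ f T (-w))) := by rw [heven]
        _ ≤ G₁ (-w) + G₂ (-w) + G₃ (-w) := hpos (-w) (by linarith)
        _ ≤ _ := le_add_of_nonneg_left (hGnn w)
      · exact absurd hzero hw0
      · calc Real.exp (-(u * psiT β ψ f T w)) ≤ G₁ w + G₂ w + G₃ w := hpos w hposw
        _ ≤ _ := le_add_of_nonneg_right (hGnn (-w))
    have hmono := integral_mono_of_nonneg
      (Filter.Eventually.of_forall (fun w => (Real.exp_pos _).le)) (hGint.add hGneg) hFbound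
    -- compute the majorant integral
    have hG₁val : ∫ w : ℝ, G₁ w = 1 := by
      rw [hG₁def, integral_indicator measurableSet_Ioc, setIntegral_const, Real.volume_real_Ioc,
        smul_eq_mul, mul_one]
      norm_num [ENNReal.toReal_ofReal]
    have hG₂val : ∫ w : ℝ, G₂ w = (u*c₄)^(-κ₁) * V₂ := by
      rw [hG₂def, integral_indicator measurableSet_Ioi, integral_const_mul,
        integral_Ioi_rpow_of_lt hexplt one_pos]
      congr 1
      rw [Real.one_rpow, hV₂def]
      rw [show -(ρ*κ₁) + 1 = -(ρ*κ₁ - 1) by ring]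
      rw [div_neg, neg_div, neg_neg, one_div]
    have hG₃val : ∫ w : ℝ, G₃ w = (u * D T)^(-κ₁) * (T^(1/β) * M) := by
      rw [hG₃def, integral_indicator measurableSet_Ioi, integral_const_mul]
      congr 1
      have h := integral_comp_mul_right_Ioi (fun v : ℝ => ψ v ^ (-κ₁)) W hccpos
      rw [h, hWcc, smul_eq_mul, ← hMdef, hccdef, Real.rpow_neg hTpos.le, inv_inv]
    calc (∫ w : ℝ, Real.exp (-(u * psiT β ψ f T w)))
        ≤ ∫ w : ℝ, ((G₁ w + G₂ w + G₃ w) + (G₁ (-w) + G₂ (-w) + G₃ (-w))) := hmono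
    _ = 2 * ∫ w : ℝ, (G₁ w + G₂ w + G₃ w) := by
        rw [integral_add hGint hGneg, integral_neg_eq_self (fun w => G₁ w + G₂ w + G₃ w)]
        ring
    _ = 2 * (1 + (u*c₄)^(-κ₁) * V₂ + (u * D T)^(-κ₁) * (T^(1/β) * M)) := by
        rw [integral_add hint12 hint3, integral_add hint1 hint2,
          hG₁val, hG₂val, hG₃val]
    _ ≤ C₇ * u^(-κ₁) := by
        have hu_one : (1:ℝ) ≤ u^(-κ₁) := by
          calc (1:ℝ) = u^(0:ℝ) := (Real.rpow_zero u).symm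
          _ ≤ u^(-κ₁) := Real.rpow_le_rpow_of_exponent_ge hu hu1 (by linarith)
        have huc₄ : (u*c₄)^(-κ₁) = u^(-κ₁) * c₄^(-κ₁) := Real.mul_rpow hu.le hc₄pos.le
        have h1 : D T ^(-κ₁) ≤ (c₃ * T^(ρ/β))^(-κ₁) :=
          Real.rpow_le_rpow_of_nonpos (by positivity) (hDlow T hT) (by linarith)
        have h2 : (c₃ * T^(ρ/β))^(-κ₁) = c₃^(-κ₁) * (T^(ρ/β))^(-κ₁) :=
          Real.mul_rpow hc₃pos.le (Real.rpow_nonneg hTpos.le _)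
        have h3 : (T^(ρ/β))^(-κ₁) * T^(1/β) ≤ 1 := by
          rw [← Real.rpow_mul hTpos.le, ← Real.rpow_add hTpos]
          apply Real.rpow_le_one_of_one_le_of_nonpos hT1
          have h5 : 0 ≤ (1/β) * (ρ*κ₁ - 1) := mul_nonneg (by positivity) (by linarith [hρκ₁])
          have h6 : ρ/β * (-κ₁) + 1/β = -((1/β) * (ρ*κ₁ - 1)) := by ring
          rw [h6]
          exact neg_nonpos.mpr h5
        have h4 : D T ^ (-κ₁) * T^(1/β) ≤ c₃^(-κ₁) := by
          calc D T ^ (-κ₁) * T^(1/β) ≤ (c₃ * T^(ρ/β))^(-κ₁) * T^(1/β) :=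
                mul_le_mul_of_nonneg_right h1 (by positivity)
          _ = c₃^(-κ₁) * ((T^(ρ/β))^(-κ₁) * T^(1/β)) := by rw [h2]; ring
          _ ≤ c₃^(-κ₁) * 1 :=
                mul_le_mul_of_nonneg_left h3 (Real.rpow_nonneg hc₃pos.le _)
          _ = c₃^(-κ₁) := mul_one _
        have hterm3 : (u * D T)^(-κ₁) * (T^(1/β) * M) ≤ u^(-κ₁) * (c₃^(-κ₁) * M) := by
          rw [Real.mul_rpow hu.le hDT.le]
          calc u^(-κ₁) * D T ^(-κ₁) * (T^(1/β) * M)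
              = u^(-κ₁) * ((D T ^(-κ₁) * T^(1/β)) * M) := by ring
          _ ≤ u^(-κ₁) * (c₃^(-κ₁) * M) := by
              apply mul_le_mul_of_nonneg_left
                (mul_le_mul_of_nonneg_right h4 hM0) (Real.rpow_nonneg hu.le _)
        have he1 : (u*c₄)^(-κ₁) * V₂ = u^(-κ₁) * (c₄^(-κ₁) * V₂) := by rw [huc₄]; ring
        have hnn1 : 0 ≤ c₄^(-κ₁) * V₂ := mul_nonneg (Real.rpow_nonneg hc₄pos.le _) hV₂pos.le
        have hnn2 : 0 ≤ c₃^(-κ₁) * M := mul_nonneg (Real.rpow_nonneg hc₃pos.le _) hM0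
        have hsum : 1 + (u*c₄)^(-κ₁) * V₂ + (u * D T)^(-κ₁) * (T^(1/β) * M)
            ≤ u^(-κ₁) + u^(-κ₁) * (c₄^(-κ₁) * V₂) + u^(-κ₁) * (c₃^(-κ₁) * M) := by
          rw [he1] at *
          linarith [hu_one, hterm3]
        calc 2 * (1 + (u*c₄)^(-κ₁) * V₂ + (u * D T)^(-κ₁) * (T^(1/β) * M))
            ≤ 2 * (u^(-κ₁) + u^(-κ₁) * (c₄^(-κ₁) * V₂) + u^(-κ₁) * (c₃^(-κ₁) * M)) := by
              linarith [hsum]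
        _ = 2*(1 + c₄^(-κ₁) * V₂ + c₃^(-κ₁) * M) * u^(-κ₁) := by ring
        _ = C₇ * u^(-κ₁) := by rw [hC₇def]
  -- conclusion
  have hδpos : (0:ℝ) < 1 - κ₁ := by linarith
  refine ⟨1 - κ₁, ⟨by linarith, by linarith⟩, C₇ * (1 - κ₁)⁻¹,
    by positivity, T₂, hT₂1, ?_⟩
  intro T hT t ht
  obtain ⟨ht0, ht1⟩ := ht
  have hintg : IntegrableOn (fun u : ℝ => C₇ * u^(-κ₁)) (Ioc 0 t) volume := by
    have h := (intervalIntegral.intervalIntegrable_rpow' (show (-1:ℝ) < -κ₁ by linarith)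
      (a := 0) (b := t)).1
    exact h.const_mul _
  have hmono2 : (∫ u in Set.Ioc (0:ℝ) t, ∫ w : ℝ, Real.exp (-(u * psiT β ψ f T w)))
      ≤ ∫ u in Set.Ioc (0:ℝ) t, C₇ * u^(-κ₁) := by
    apply integral_mono_of_nonneg
    · exact Filter.Eventually.of_forall (fun u => integral_nonneg (fun w => (Real.exp_pos _).le))
    · exact hintg
    · exact (ae_restrict_iff' measurableSet_Ioc).mpr
        (Filter.Eventually.of_forall (fun u hu => inner T hT u hu.1 (le_trans hu.2 ht1.le)))
  have hval : ∫ u in Set.Ioc (0:ℝ) t, C₇ * u^(-κ₁) = (C₇ * (1 - κ₁)⁻¹) * t^(1-κ₁) := by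
    rw [integral_const_mul, ← intervalIntegral.integral_of_le ht0.le,
      integral_rpow (Or.inl (show (-1:ℝ) < -κ₁ by linarith)),
      show -κ₁ + 1 = 1 - κ₁ by ring, Real.zero_rpow hδpos.ne', sub_zero]
    ring
  calc (∫ u in Set.Ioc (0:ℝ) t, ∫ w : ℝ, Real.exp (-(u * psiT β ψ f T w)))
      ≤ ∫ u in Set.Ioc (0:ℝ) t, C₇ * u^(-κ₁) := hmono2
  _ = (C₇ * (1 - κ₁)⁻¹) * t^(1-κ₁) := hval
end

section
/- Let α ∈ (1,2), β ∈ (1,2), and let L : (0,∞) → (0,∞) be measurable, slowly varying at infinity, and such that z ↦ z^{1−α}·L(z) is locally integrable on (0,∞). Then there exists a constant C > 0, depending only on α, such that for every r ∈ (0,1) there is T₀ ≥ 1 with ∫_{{0 < |z| ≤ r}} |z|^{1−α} · L(T^{1/(αβ)}·|z|) / L(T^{1/(αβ)}) dz ≤ C·r^{2−α} for all T ≥ T₀. -/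
set_option maxHeartbeats 1000000

open MeasureTheory

section StmtAux

open Filter Set intervalIntegral

lemma my_chain (h : ℝ → ℝ) (X ε : ℝ) (hε : 0 ≤ ε)
    (H : ∀ x ≥ X, ∀ u ∈ Icc (0:ℝ) 1, |h (x + u) - h x| ≤ ε) :
    ∀ x ≥ X, ∀ s ≥ (0:ℝ), |h (x + s) - h x| ≤ ε * (s + 1) := by
  have main : ∀ n : ℕ, ∀ s : ℝ, 0 ≤ s → s ≤ n → ∀ x ≥ X, |h (x + s) - h x| ≤ ε * (s + 1) := by
    intro n
    induction n with
    | zero =>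
      intro s hs0 hsn x hx
      have : s = 0 := le_antisymm (by exact_mod_cast hsn) hs0
      subst this
      simp only [add_zero, sub_self, abs_zero]
      nlinarith
    | succ n ih =>
      intro s hs0 hsn x hx
      by_cases hs1 : s ≤ 1
      · have := H x hx s ⟨hs0, hs1⟩
        nlinarith [abs_nonneg (h (x+s) - h x)]
      · push_neg at hs1
        have h1 : |h ((x+1) + (s-1)) - h (x+1)| ≤ ε * ((s-1) + 1) := by
          refine ih (s-1) (by linarith) ?_ (x+1) (by linarith)
          push_cast at hsn ⊢
          linarith
        have h2 : |h (x + 1) - h x| ≤ ε := H x hx 1 ⟨zero_le_one, le_refl 1⟩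
        have harg : (x+1) + (s-1) = x + s := by ring
        rw [harg] at h1
        have : |h (x + s) - h x| ≤ |h (x+s) - h (x+1)| + |h (x+1) - h x| := by
          have e : h (x+s) - h x = (h (x+s) - h (x+1)) + (h (x+1) - h x) := by ring
          rw [e]; exact abs_add_le _ _
        calc |h (x + s) - h x| ≤ |h (x+s) - h (x+1)| + |h (x+1) - h x| := this
          _ ≤ ε * ((s-1)+1) + ε := add_le_add h1 h2
          _ = ε * (s + 1) := by ring
  intro x hx s hs
  exact main ⌈s⌉₊ s hs (Nat.le_ceil s) x hx

lemma my_uct (h : ℝ → ℝ) (hm : Measurable h)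
    (hsv : ∀ u : ℝ, Tendsto (fun x => h (x + u) - h x) atTop (nhds 0)) :
    ∀ ε > (0:ℝ), ∃ X : ℝ, ∀ x ≥ X, ∀ u ∈ Icc (0:ℝ) 1, |h (x + u) - h x| ≤ ε := by
  intro ε hε
  by_contra hcon
  push_neg at hcon
  choose x hx u hu hgt using hcon
  set xs : ℕ → ℝ := fun n => x n with hxs_def
  set us : ℕ → ℝ := fun n => u n with hus_def
  have hxs : Tendsto xs atTop atTop :=
    tendsto_atTop_mono (fun n => hx (n : ℝ)) tendsto_natCast_atTop_atTop
  have hys : Tendsto (fun n => xs n + us n) atTop atTop := by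
    apply tendsto_atTop_mono (fun n => ?_) hxs
    have := (hu (n:ℝ)).1
    simp only [xs, us]
    linarith
  -- Egorov applications
  have meas1 : ∀ n : ℕ, StronglyMeasurable (fun v : ℝ => h (xs n + v) - h (xs n)) := by
    intro n
    exact ((hm.comp (measurable_const.add measurable_id)).sub measurable_const).stronglyMeasurable
  have meas2 : ∀ n : ℕ, StronglyMeasurable (fun v : ℝ => h (xs n + us n + v) - h (xs n + us n)) := by
    intro n
    exact ((hm.comp (measurable_const.add measurable_id)).sub measurable_const).stronglyMeasurable
  have key1 : ∀ᵐ v ∂(volume : Measure ℝ), v ∈ Icc (0:ℝ) 2 →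
      Tendsto (fun n => h (xs n + v) - h (xs n)) atTop (nhds 0) := by
    refine Eventually.of_forall (fun v _ => ?_)
    exact ((hsv v).comp hxs)
  have key2 : ∀ᵐ v ∂(volume : Measure ℝ), v ∈ Icc (-1:ℝ) 2 →
      Tendsto (fun n => h (xs n + us n + v) - h (xs n + us n)) atTop (nhds 0) := by
    refine Eventually.of_forall (fun v _ => ?_)
    exact ((hsv v).comp hys)
  obtain ⟨t, hts, htm, htμ, htu⟩ :=
    MeasureTheory.tendstoUniformlyOn_of_ae_tendsto meas1 stronglyMeasurable_zero
      measurableSet_Icc (by simp [Real.volume_Icc]) key1 (by norm_num : (0:ℝ) < 1/10)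
  obtain ⟨t', hts', htm', htμ', htu'⟩ :=
    MeasureTheory.tendstoUniformlyOn_of_ae_tendsto meas2 stronglyMeasurable_zero
      measurableSet_Icc (by simp [Real.volume_Icc]) key2 (by norm_num : (0:ℝ) < 1/10)
  rw [Metric.tendstoUniformlyOn_iff] at htu htu'
  have h1 := htu (ε/2) (by linarith)
  have h2 := htu' (ε/2) (by linarith)
  obtain ⟨n, hn1, hn2⟩ := ((h1.and h2).exists)
  -- find good v
  have hune : ¬ (Icc (0:ℝ) 2 ⊆ t ∪ ((fun w => w + (-(us n))) ⁻¹' t')) := by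
    intro hsub
    have hμ := measure_mono hsub (μ := volume)
    have hμ2 : volume (t ∪ ((fun w => w + (-(us n))) ⁻¹' t')) ≤
        ENNReal.ofReal (1/10) + ENNReal.ofReal (1/10) := by
      refine le_trans (measure_union_le _ _) ?_
      refine add_le_add htμ ?_
      rw [measure_preimage_add_right]
      exact htμ'
    rw [Real.volume_Icc] at hμ
    have : ENNReal.ofReal (2 - 0) ≤ ENNReal.ofReal (1/10 + 1/10) := by
      rw [ENNReal.ofReal_add (by norm_num) (by norm_num)]
      exact hμ.trans hμ2
    rw [ENNReal.ofReal_le_ofReal_iff (by norm_num)] at this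
    norm_num at this
  obtain ⟨v, hv02, hvB⟩ := not_subset.mp hune
  simp only [mem_union, not_or, mem_preimage] at hvB
  obtain ⟨hvt, hvt'⟩ := hvB
  have hv1 : dist 0 (h (xs n + v) - h (xs n)) < ε/2 := hn1 v ⟨hv02, hvt⟩
  have hw2 : dist 0 (h (xs n + us n + (v + -(us n))) - h (xs n + us n)) < ε/2 := by
    refine hn2 (v + -(us n)) ⟨⟨?_, ?_⟩, hvt'⟩
    · have := (hu (n:ℝ)).2; have := hv02.1; simp only [us]; linarith
    · have := (hu (n:ℝ)).1; have := hv02.2; simp only [us]; linarith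
  have harg : xs n + us n + (v + -(us n)) = xs n + v := by ring
  rw [harg] at hw2
  rw [Real.dist_eq] at hv1 hw2
  have hcontra := hgt (n : ℝ)
  have : |h (xs n + us n) - h (xs n)| ≤
      |h (xs n + v) - h (xs n + us n)| + |h (xs n + v) - h (xs n)| := by
    have : h (xs n + us n) - h (xs n)
        = -(h (xs n + v) - h (xs n + us n)) + (h (xs n + v) - h (xs n)) := by ring
    rw [this]
    exact (abs_add_le _ _).trans (by rw [abs_neg])
  have e1 : |h (xs n + v) - h (xs n)| < ε/2 := by
    simpa [abs_sub_comm] using hv1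
  have e2 : |h (xs n + v) - h (xs n + us n)| < ε/2 := by
    simpa [abs_sub_comm] using hw2
  simp only [xs, us] at this
  linarith

lemma my_potter (L : ℝ → ℝ) (hL_meas : Measurable L) (hL_pos : ∀ x > (0:ℝ), 0 < L x)
    (hL_sv : ∀ c > (0:ℝ), Tendsto (fun x : ℝ => L (c * x) / L x) atTop (nhds 1))
    (δ : ℝ) (hδ : 0 < δ) :
    ∃ A ≥ (1:ℝ), ∀ w v : ℝ, A ≤ w → w ≤ v → L w ≤ L v * Real.exp δ * (v / w) ^ δ := by
  set h : ℝ → ℝ := fun x => Real.log (L (Real.exp x)) with hh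
  have hm : Measurable h := (hL_meas.comp Real.measurable_exp).log
  have hsv' : ∀ u : ℝ, Tendsto (fun x => h (x + u) - h x) atTop (nhds 0) := by
    intro u
    have h1 : Tendsto (fun x : ℝ => L (Real.exp u * Real.exp x) / L (Real.exp x)) atTop (nhds 1) :=
      (hL_sv (Real.exp u) (Real.exp_pos u)).comp Real.tendsto_exp_atTop
    have h2 : Tendsto (fun x : ℝ => Real.log (L (Real.exp u * Real.exp x) / L (Real.exp x)))
        atTop (nhds 0) := by
      have := (Real.continuousAt_log one_ne_zero).tendsto.comp h1
      simpa [Function.comp_def] using this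
    refine h2.congr (fun x => ?_)
    have p1 : 0 < L (Real.exp u * Real.exp x) :=
      hL_pos _ (by positivity)
    have p2 : 0 < L (Real.exp x) := hL_pos _ (Real.exp_pos x)
    rw [Real.log_div p1.ne' p2.ne', hh]
    simp [Real.exp_add, mul_comm]
  obtain ⟨X, hX⟩ := my_uct h hm hsv' δ hδ
  obtain H := my_chain h X δ hδ.le hX
  refine ⟨max 1 (Real.exp X), le_max_left _ _, fun w v hw hwv => ?_⟩
  have hw0 : (0:ℝ) < w := lt_of_lt_of_le one_pos (le_trans (le_max_left _ _) hw)
  have hv0 : (0:ℝ) < v := lt_of_lt_of_le hw0 hwv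
  have hwX : Real.exp X ≤ w := le_trans (le_max_right _ _) hw
  have hlogw : X ≤ Real.log w := by
    rw [← Real.log_exp X]
    exact Real.log_le_log (Real.exp_pos X) hwX
  have hs : (0:ℝ) ≤ Real.log v - Real.log w := by
    have := Real.log_le_log hw0 hwv
    linarith
  have := H (Real.log w) hlogw (Real.log v - Real.log w) hs
  have harg : Real.log w + (Real.log v - Real.log w) = Real.log v := by ring
  rw [harg] at this
  have hhw : h (Real.log w) = Real.log (L w) := by rw [hh]; simp [Real.exp_log hw0]
  have hhv : h (Real.log v) = Real.log (L v) := by rw [hh]; simp [Real.exp_log hv0]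
  rw [hhw, hhv] at this
  have hle : Real.log (L w) - Real.log (L v) ≤ δ * (Real.log v - Real.log w) + δ := by
    have := abs_le.mp this
    linarith [this.2]
  have hLw : 0 < L w := hL_pos w hw0
  have hLv : 0 < L v := hL_pos v hv0
  have : Real.log (L w) ≤ Real.log (L v) + δ * Real.log (v / w) + δ := by
    rw [Real.log_div hv0.ne' hw0.ne']
    linarith
  calc L w = Real.exp (Real.log (L w)) := (Real.exp_log hLw).symm
    _ ≤ Real.exp (Real.log (L v) + δ * Real.log (v / w) + δ) := Real.exp_le_exp.mpr this
    _ = L v * Real.exp δ * (v / w) ^ δ := by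
        rw [Real.exp_add, Real.exp_add, Real.exp_log hLv,
          Real.rpow_def_of_pos (div_pos hv0 hw0)]
        ring_nf

end StmtAux

open Filter Set intervalIntegral in
/-- Let `α, β ∈ (1,2)` and let `L : (0,∞) → (0,∞)` be measurable, slowly
varying at infinity, such that `z ↦ z^{1−α}·L(z)` is locally integrable on `(0,∞)`. Then
there exists `C > 0`, depending only on `α`, such that for every `r ∈ (0,1)` there is
`T₀ ≥ 1` with `∫_{0<|z|≤r} |z|^{1−α} · L(T^{1/(αβ)}·|z|)/L(T^{1/(αβ)}) dz ≤ C·r^{2−α}` for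
all `T ≥ T₀`. -/
theorem stmt_9 (α β : ℝ) (hα : α ∈ Set.Ioo (1:ℝ) 2) (hβ : β ∈ Set.Ioo (1:ℝ) 2)
    (L : ℝ → ℝ) (hL_meas : Measurable L) (hL_pos : ∀ x > (0:ℝ), 0 < L x)
    (hL_sv : ∀ c > (0:ℝ),
      Filter.Tendsto (fun x : ℝ => L (c * x) / L x) Filter.atTop (nhds 1))
    (hL_loc : ∀ b > (0:ℝ), IntegrableOn (fun z : ℝ => z ^ (1 - α) * L z) (Set.Ioc 0 b) volume) :
    ∃ C > (0:ℝ), ∀ r ∈ Set.Ioo (0:ℝ) 1, ∃ T₀ ≥ (1:ℝ), ∀ T ≥ T₀,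
      (∫ z in {z : ℝ | 0 < |z| ∧ |z| ≤ r},
        |z| ^ (1 - α) * L (T ^ (1/(α * β)) * |z|) / L (T ^ (1/(α * β))))
        ≤ C * r ^ (2 - α) := by
  obtain ⟨hα1, hα2⟩ := hα
  obtain ⟨hβ1, hβ2⟩ := hβ
  set δ : ℝ := (2 - α) / 2 with hδdef
  have hδ : 0 < δ := by simp only [hδdef]; linarith
  have hδ1 : δ ≤ 1 := by simp only [hδdef]; linarith
  have h2α : (0:ℝ) < 2 - α := by linarith
  refine ⟨2 + 8 * Real.exp 1 / (2 - α), by positivity, ?_⟩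
  rintro r ⟨hr0, hr1⟩
  obtain ⟨A, hA1, hPot⟩ := my_potter L hL_meas hL_pos hL_sv δ hδ
  have hA0 : (0:ℝ) < A := lt_of_lt_of_le one_pos hA1
  set g : ℝ → ℝ := fun u => u ^ (1 - α) * L u with hg
  set M : ℝ := ∫ u in (0:ℝ)..A, g u with hM
  have hM0 : 0 ≤ M := by
    refine intervalIntegral.integral_nonneg hA0.le (fun u hu => ?_)
    rcases eq_or_lt_of_le hu.1 with h | h
    · simp [hg, ← h, Real.zero_rpow (by linarith : (1:ℝ) - α ≠ 0)]
    · exact mul_nonneg (Real.rpow_nonneg (le_of_lt h) _) (hL_pos u h).le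
  set c₀ : ℝ := L A * Real.exp (-δ) * A ^ δ with hc₀def
  have hLA : 0 < L A := hL_pos A hA0
  have hc₀ : 0 < c₀ := by positivity
  -- lower bound for L
  have hLlower : ∀ a : ℝ, A ≤ a → c₀ * a ^ (-δ) ≤ L a := by
    intro a haA
    have ha0 : (0:ℝ) < a := lt_of_lt_of_le hA0 haA
    have h1 := hPot A a le_rfl haA
    have hAδ : (0:ℝ) < A ^ δ := Real.rpow_pos_of_pos hA0 δ
    have hfac : (0:ℝ) < Real.exp (-δ) * A ^ δ * a ^ (-δ) := by positivity
    have e1 : Real.exp δ * Real.exp (-δ) = 1 := by rw [← Real.exp_add]; simp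
    have e2 : a ^ δ * a ^ (-δ) = 1 := by
      rw [← Real.rpow_add ha0]; simp
    calc c₀ * a ^ (-δ) = L A * (Real.exp (-δ) * A ^ δ * a ^ (-δ)) := by
          rw [hc₀def]; ring
      _ ≤ (L a * Real.exp δ * (a / A) ^ δ) * (Real.exp (-δ) * A ^ δ * a ^ (-δ)) :=
          mul_le_mul_of_nonneg_right h1 hfac.le
      _ = L a * (Real.exp δ * Real.exp (-δ)) * (a ^ δ * a ^ (-δ)) * (A ^ δ / A ^ δ) := by
          rw [Real.div_rpow ha0.le hA0.le]; ring
      _ = L a := by rw [e1, e2, div_self hAδ.ne']; ring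
  -- eventual conditions
  have hev1 : ∀ᶠ a in atTop, L (r * a) / L a ≤ 2 :=
    (hL_sv r hr0).eventually_le_const one_lt_two
  have hev2 : ∀ᶠ a in atTop, M / c₀ * a ^ (-δ) ≤ r ^ (2 - α) := by
    have ht : Tendsto (fun a : ℝ => M / c₀ * a ^ (-δ)) atTop (nhds 0) := by
      have := (tendsto_rpow_neg_atTop hδ).const_mul (M / c₀)
      simpa using this
    exact ht.eventually_le_const (Real.rpow_pos_of_pos hr0 _)
  obtain ⟨a₁, ha₁⟩ := eventually_atTop.mp (hev1.and hev2)
  set a₀ : ℝ := max a₁ (max 1 (A / r)) with ha₀def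
  have ha₀1 : (1:ℝ) ≤ a₀ := le_trans (le_max_left _ _) (le_max_right _ _)
  have ha₀0 : (0:ℝ) < a₀ := lt_of_lt_of_le one_pos ha₀1
  have hαβ : (0:ℝ) < α * β := by nlinarith
  refine ⟨max 1 (a₀ ^ (α * β)), le_max_left _ _, ?_⟩
  intro T hT
  have hT1 : (1:ℝ) ≤ T := le_trans (le_max_left _ _) hT
  have hT0 : (0:ℝ) < T := lt_of_lt_of_le one_pos hT1
  set a : ℝ := T ^ (1 / (α * β)) with ha_def
  have ha₀a : a₀ ≤ a := by
    have h1 : a₀ ^ (α * β) ≤ T := le_trans (le_max_right _ _) hT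
    have h2 : (a₀ ^ (α * β)) ^ (1 / (α * β)) ≤ T ^ (1 / (α * β)) :=
      Real.rpow_le_rpow (by positivity) h1 (by positivity)
    calc a₀ = a₀ ^ ((α * β) * (1 / (α * β))) := by
          rw [mul_one_div_cancel hαβ.ne', Real.rpow_one]
      _ = (a₀ ^ (α * β)) ^ (1 / (α * β)) := Real.rpow_mul ha₀0.le _ _
      _ ≤ a := h2
  have ha1 : (1:ℝ) ≤ a := le_trans ha₀1 ha₀a
  have ha0 : (0:ℝ) < a := lt_of_lt_of_le one_pos ha1
  have haA : A ≤ a := by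
    have : A / r ≤ a₀ := le_trans (le_max_right _ _) (le_max_right _ _)
    have h2 : A ≤ A / r := by
      rw [le_div_iff₀ hr0]; nlinarith
    linarith [le_trans this ha₀a]
  have haAr : A / r ≤ a := le_trans (le_trans (le_max_right _ _) (le_max_right _ _)) ha₀a
  have hLa : 0 < L a := hL_pos a ha0
  obtain ⟨hrat2, hJ1b⟩ := ha₁ a (le_trans (le_max_left _ _) ha₀a)
  set m : ℝ := A / a with hm_def
  have hm0 : (0:ℝ) < m := by positivity
  have hmr : m ≤ r := by
    rw [hm_def, div_le_iff₀ ha0]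
    rw [div_le_iff₀ hr0] at haAr
    nlinarith
  have ham : a * m = A := by rw [hm_def]; field_simp
  -- core integrability
  have hIcore : IntervalIntegrable (fun z => g (a * z)) volume 0 r := by
    have h1 : IntegrableOn g (Set.Ioc 0 (a * r)) volume := hL_loc (a * r) (by positivity)
    rw [← intervalIntegrable_iff_integrableOn_Ioc_of_le (by positivity)] at h1
    have h2 := h1.comp_mul_left (c := a)
    simpa [ha0.ne'] using h2
  set G₀ : ℝ → ℝ := fun z => (a ^ (α - 1) / L a) * g (a * z) with hG₀
  have hIG : IntervalIntegrable G₀ volume 0 r := hIcore.const_mul _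
  set F : ℝ → ℝ := fun z => |z| ^ (1 - α) * L (a * |z|) / L a with hF
  have hkey : a ^ (α - 1) * a ^ (1 - α) = 1 := by
    rw [← Real.rpow_add ha0]; norm_num
  have hFG : ∀ z ∈ Icc (0:ℝ) r, F z = G₀ z := by
    intro z hz
    rcases eq_or_lt_of_le hz.1 with h | h
    · simp [hF, hG₀, hg, ← h, Real.zero_rpow (by linarith : (1:ℝ) - α ≠ 0)]
    · have habs : |z| = z := abs_of_pos h
      simp only [hF, hG₀, hg, habs]
      rw [Real.mul_rpow ha0.le h.le]
      have hnum : a ^ (α - 1) * (a ^ (1 - α) * z ^ (1 - α) * L (a * z))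
          = z ^ (1 - α) * L (a * z) := by
        calc a ^ (α - 1) * (a ^ (1 - α) * z ^ (1 - α) * L (a * z))
            = (a ^ (α - 1) * a ^ (1 - α)) * (z ^ (1 - α) * L (a * z)) := by ring
          _ = z ^ (1 - α) * L (a * z) := by rw [hkey, one_mul]
      rw [div_mul_eq_mul_div, hnum]
  -- two-sided reduction
  have hIGoc : IntegrableOn G₀ (Set.Ioc 0 r) volume :=
    (intervalIntegrable_iff_integrableOn_Ioc_of_le hr0.le).mp hIG
  have hIFoc : IntegrableOn F (Set.Ioc 0 r) volume :=
    hIGoc.congr_fun (fun z hz => (hFG z (Set.Ioc_subset_Icc_self hz)).symm) measurableSet_Ioc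
  have hIF : IntervalIntegrable F volume 0 r :=
    (intervalIntegrable_iff_integrableOn_Ioc_of_le hr0.le).mpr hIFoc
  have hFneg : (fun x => F (-x)) = F := by
    funext x; simp only [hF, abs_neg]
  have hIFneg : IntegrableOn F (Set.Ioc (-r) 0) volume := by
    have h1 : IntervalIntegrable (fun x => F (-x)) volume (-0) (-r) :=
      (IntervalIntegrable.iff_comp_neg (f := F) (a := 0) (b := r)).mp hIF
    rw [hFneg, neg_zero] at h1
    exact (intervalIntegrable_iff_integrableOn_Ioc_of_le (by linarith)).mp h1.symm
  have hSae : {z : ℝ | 0 < |z| ∧ |z| ≤ r} =ᵐ[volume] ((Set.Ioc (-r) 0 ∪ Set.Ioc 0 r : Set ℝ)) := by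
    rw [MeasureTheory.ae_eq_set]
    constructor
    · refine measure_mono_null (fun z hz => ?_) (measure_singleton (-r))
      obtain ⟨⟨hz1, hz2⟩, hz3⟩ := hz
      simp only [Set.mem_union, Set.mem_Ioc, not_or, not_and_or, not_lt, not_le] at hz3
      rw [abs_pos] at hz1
      rw [abs_le] at hz2
      simp only [Set.mem_singleton_iff]
      rcases lt_trichotomy z 0 with h | h | h
      · rcases hz3.1 with h' | h'
        · linarith [hz2.1]
        · linarith
      · exact absurd h hz1
      · rcases hz3.2 with h' | h'
        · linarith
        · linarith [hz2.2]
    · refine measure_mono_null (fun z hz => ?_) (measure_singleton (0:ℝ))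
      obtain ⟨hz1, hz2⟩ := hz
      simp only [Set.mem_setOf_eq, not_and_or, not_lt, not_le] at hz2
      simp only [Set.mem_singleton_iff]
      rcases hz1 with h | h
      · rcases hz2 with h' | h'
        · have := abs_nonneg z; have : |z| = 0 := le_antisymm h' this
          exact abs_eq_zero.mp this
        · exfalso
          have : |z| ≤ r := by
            rw [abs_le]; constructor <;> linarith [h.1, h.2]
          linarith
      · exfalso
        have : |z| ≤ r := by rw [abs_of_pos h.1]; exact h.2
        rcases hz2 with h' | h'
        · rw [abs_of_pos h.1] at h'; linarith [h.1]
        · linarith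
  have hdisj : Disjoint (Set.Ioc (-r) 0) (Set.Ioc 0 r) :=
    Set.disjoint_left.mpr (fun z h1 h2 => absurd h2.1 (not_lt.mpr h1.2))
  have hsplit2 : (∫ z in {z : ℝ | 0 < |z| ∧ |z| ≤ r}, F z)
      = (∫ z in Set.Ioc (-r) 0, F z) + ∫ z in Set.Ioc 0 r, F z := by
    rw [setIntegral_congr_set hSae]
    exact setIntegral_union hdisj measurableSet_Ioc hIFneg hIFoc
  have hneg_eq : (∫ z in Set.Ioc (-r) 0, F z) = ∫ z in Set.Ioc 0 r, F z := by
    rw [← intervalIntegral.integral_of_le (by linarith : -r ≤ (0:ℝ)),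
        ← intervalIntegral.integral_of_le hr0.le]
    have h1 := intervalIntegral.integral_comp_neg (a := (0:ℝ)) (b := r) F
    rw [hFneg, neg_zero] at h1
    exact h1.symm
  have hFG' : (∫ x in (0:ℝ)..r, F x) = ∫ x in (0:ℝ)..r, G₀ x := by
    apply intervalIntegral.integral_congr
    rw [Set.uIcc_of_le hr0.le]
    exact hFG
  -- splitting the one-sided integral
  have hsub1 : Set.uIcc (0:ℝ) m ⊆ Set.uIcc (0:ℝ) r := by
    rw [Set.uIcc_of_le hm0.le, Set.uIcc_of_le hr0.le]
    exact Set.Icc_subset_Icc le_rfl hmr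
  have hsub2 : Set.uIcc m r ⊆ Set.uIcc (0:ℝ) r := by
    rw [Set.uIcc_of_le hmr, Set.uIcc_of_le hr0.le]
    exact Set.Icc_subset_Icc hm0.le le_rfl
  have hIG1 : IntervalIntegrable G₀ volume 0 m := hIG.mono_set hsub1
  have hIG2 : IntervalIntegrable G₀ volume m r := hIG.mono_set hsub2
  have hsplit : ∫ x in (0:ℝ)..r, G₀ x = (∫ x in (0:ℝ)..m, G₀ x) + ∫ x in m..r, G₀ x :=
    (intervalIntegral.integral_add_adjacent_intervals hIG1 hIG2).symm
  -- first piece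
  have hJ1 : ∫ x in (0:ℝ)..m, G₀ x = (a ^ (α - 1) / L a) * (a⁻¹ * M) := by
    simp only [hG₀]
    rw [intervalIntegral.integral_const_mul]
    congr 1
    have h1 : (∫ x in (0:ℝ)..m, g (a * x)) = a⁻¹ • ∫ u in (a*0)..(a*m), g u :=
      intervalIntegral.integral_comp_mul_left g ha0.ne'
    rw [mul_zero, ham] at h1
    rw [h1, smul_eq_mul, hM]
  have hJ1bound : (a ^ (α - 1) / L a) * (a⁻¹ * M) ≤ r ^ (2 - α) := by
    have e1 : a ^ (α - 1) * a⁻¹ = a ^ (α - 2) := by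
      rw [← Real.rpow_neg_one a, ← Real.rpow_add ha0, show α - 1 + -1 = α - 2 by ring]
    have e2 : (a ^ (α - 1) / L a) * (a⁻¹ * M) = M * (a ^ (α - 1) * a⁻¹) / L a := by
      ring
    rw [e2, e1]
    have hL1 : c₀ * a ^ (-δ) ≤ L a := hLlower a haA
    have hpos : (0:ℝ) < c₀ * a ^ (-δ) := by positivity
    calc M * a ^ (α - 2) / L a ≤ M * a ^ (α - 2) / (c₀ * a ^ (-δ)) := by
          apply div_le_div_of_nonneg_left (by positivity) hpos hL1
      _ = M / c₀ * (a ^ (α - 2) / a ^ (-δ)) := by ring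
      _ = M / c₀ * a ^ (-δ) := by
          rw [← Real.rpow_sub ha0, show α - 2 - -δ = -δ by rw [hδdef]; ring]
      _ ≤ r ^ (2 - α) := hJ1b
  -- second piece
  have hpoint : ∀ x ∈ Set.Icc m r, G₀ x ≤ (2 * Real.exp 1 * r ^ δ) * x ^ (δ - 1) := by
    intro x hx
    have hx0 : 0 < x := lt_of_lt_of_le hm0 hx.1
    have hax : A ≤ a * x := by rw [← ham]; exact mul_le_mul_of_nonneg_left hx.1 ha0.le
    have haxr : a * x ≤ a * r := mul_le_mul_of_nonneg_left hx.2 ha0.le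
    have h1 := hPot (a * x) (a * r) hax haxr
    have hrx : (a * r) / (a * x) = r / x := by
      rw [mul_div_mul_left r x ha0.ne']
    rw [hrx] at h1
    have hfac : (0:ℝ) ≤ a ^ (α - 1) / L a * (a * x) ^ (1 - α) := by positivity
    have e3 : a ^ (α - 1) * (a * x) ^ (1 - α) = x ^ (1 - α) := by
      rw [Real.mul_rpow ha0.le hx0.le]
      calc a ^ (α - 1) * (a ^ (1 - α) * x ^ (1 - α))
          = (a ^ (α - 1) * a ^ (1 - α)) * x ^ (1 - α) := by ring
        _ = x ^ (1 - α) := by rw [hkey, one_mul]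
    have hfinal_eq : (r / x) ^ δ * x ^ (1 - α) = r ^ δ * x ^ (δ - 1) := by
      rw [Real.div_rpow hr0.le hx0.le, div_mul_eq_mul_div, mul_div_assoc,
        ← Real.rpow_sub hx0, show 1 - α - δ = δ - 1 by rw [hδdef]; ring]
    have h2' : L (a * r) / L a ≤ 2 := by rw [mul_comm]; exact hrat2
    have hee : Real.exp δ ≤ Real.exp 1 := Real.exp_le_exp.mpr hδ1
    have hnn : (0:ℝ) ≤ r ^ δ * x ^ (δ - 1) := by positivity
    have hLar : (0:ℝ) < L (a * r) := hL_pos _ (by positivity)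
    calc G₀ x = (a ^ (α - 1) / L a * (a * x) ^ (1 - α)) * L (a * x) := by
          simp only [hG₀, hg]; ring
      _ ≤ (a ^ (α - 1) / L a * (a * x) ^ (1 - α)) * (L (a * r) * Real.exp δ * (r / x) ^ δ) :=
          mul_le_mul_of_nonneg_left h1 hfac
      _ = (L (a * r) / L a) * Real.exp δ * ((r / x) ^ δ * (a ^ (α - 1) * (a * x) ^ (1 - α))) := by
          ring
      _ = (L (a * r) / L a * Real.exp δ) * (r ^ δ * x ^ (δ - 1)) := by
          rw [e3, hfinal_eq]
          try ring
      _ ≤ (2 * Real.exp 1) * (r ^ δ * x ^ (δ - 1)) := by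
          refine mul_le_mul ?_ le_rfl hnn (by positivity)
          exact mul_le_mul h2' hee (Real.exp_pos δ).le (by norm_num)
      _ = (2 * Real.exp 1 * r ^ δ) * x ^ (δ - 1) := by ring
  have hIrpow : IntervalIntegrable (fun x : ℝ => (2 * Real.exp 1 * r ^ δ) * x ^ (δ - 1)) volume m r :=
    (intervalIntegral.intervalIntegrable_rpow' (by linarith : (-1:ℝ) < δ - 1)).const_mul _
  have hJ2a : (∫ x in m..r, G₀ x) ≤ ∫ x in m..r, (2 * Real.exp 1 * r ^ δ) * x ^ (δ - 1) :=
    intervalIntegral.integral_mono_on hmr hIG2 hIrpow hpoint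
  have hrpow_int : (∫ x in m..r, x ^ (δ - 1)) ≤ r ^ δ / δ := by
    have hle : (∫ x in m..r, x ^ (δ - 1)) ≤ ∫ x in (0:ℝ)..r, x ^ (δ - 1) := by
      have hi1 : IntervalIntegrable (fun x : ℝ => x ^ (δ - 1)) volume 0 m :=
        intervalIntegral.intervalIntegrable_rpow' (by linarith)
      have hi2 : IntervalIntegrable (fun x : ℝ => x ^ (δ - 1)) volume m r :=
        intervalIntegral.intervalIntegrable_rpow' (by linarith)
      have hsplit' := intervalIntegral.integral_add_adjacent_intervals hi1 hi2
      have hnn : (0:ℝ) ≤ ∫ x in (0:ℝ)..m, x ^ (δ - 1) :=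
        intervalIntegral.integral_nonneg hm0.le (fun u hu => Real.rpow_nonneg hu.1 _)
      linarith
    have hval : (∫ x in (0:ℝ)..r, x ^ (δ - 1)) = (r ^ δ - 0 ^ δ) / δ := by
      rw [integral_rpow (Or.inl (by linarith : (-1:ℝ) < δ - 1)),
        show δ - 1 + 1 = δ by ring]
    rw [hval, Real.zero_rpow hδ.ne'] at hle
    calc (∫ x in m..r, x ^ (δ - 1)) ≤ (r ^ δ - 0) / δ := hle
      _ = r ^ δ / δ := by ring
  have hJ2 : (∫ x in m..r, G₀ x) ≤ (2 * Real.exp 1 / δ) * r ^ (2 - α) := by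
    calc (∫ x in m..r, G₀ x)
        ≤ (2 * Real.exp 1 * r ^ δ) * ∫ x in m..r, x ^ (δ - 1) := by
          rw [← intervalIntegral.integral_const_mul]; exact hJ2a
      _ ≤ (2 * Real.exp 1 * r ^ δ) * (r ^ δ / δ) :=
          mul_le_mul_of_nonneg_left hrpow_int (by positivity)
      _ = (2 * Real.exp 1 / δ) * (r ^ δ * r ^ δ) := by ring
      _ = (2 * Real.exp 1 / δ) * r ^ (2 - α) := by
          rw [← Real.rpow_add hr0, show δ + δ = 2 - α by rw [hδdef]; ring]
  -- assemble
  have hJ1' : (∫ x in (0:ℝ)..m, G₀ x) ≤ r ^ (2 - α) := hJ1 ▸ hJ1bound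
  calc (∫ z in {z : ℝ | 0 < |z| ∧ |z| ≤ r}, F z)
      = 2 * ∫ x in (0:ℝ)..r, G₀ x := by
        rw [hsplit2, hneg_eq, ← intervalIntegral.integral_of_le hr0.le, hFG']
        ring
    _ = 2 * ((∫ x in (0:ℝ)..m, G₀ x) + ∫ x in m..r, G₀ x) := by rw [hsplit]
    _ ≤ 2 * (r ^ (2 - α) + (2 * Real.exp 1 / δ) * r ^ (2 - α)) := by
        have := add_le_add hJ1' hJ2
        linarith
    _ = (2 + 8 * Real.exp 1 / (2 - α)) * r ^ (2 - α) := by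
        rw [hδdef]
        field_simp
        ring
end

section
/- For β ∈ (1,2), the constant c := ∫_0^∞ (p_1(0) − p_1(u^{−1/β})) · u^{−1/β} du is finite, and for every t > 0 there exists a constant c₁, depending only on t and β, such that for every x ≠ 0, ∫_0^t (p_u(0) − p_u(x)) du ≤ min(c₁, c·|x|^{β−1}). -/
open MeasureTheory Set

private lemma integrable_comp_abs' {f : ℝ → ℝ} (hf : IntegrableOn f (Set.Ioi 0)) :
    Integrable fun x => f |x| := by
  have hIoi : IntegrableOn (fun x => f |x|) (Set.Ioi 0) :=
    hf.congr_fun (fun x hx => by rw [abs_of_pos hx]) measurableSet_Ioi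
  have hIic : IntegrableOn (fun x => f |x|) (Set.Iic 0) := by
    have m : MeasurableEmbedding (Neg.neg : ℝ → ℝ) := (Homeomorph.neg ℝ).measurableEmbedding
    have hiff := m.integrableOn_map_iff (f := fun x : ℝ => f |x|) (s := Set.Iic 0)
      (μ := (volume : Measure ℝ))
    rw [Measure.map_neg_eq_self] at hiff
    rw [hiff]
    simp only [Function.comp_def, abs_neg, neg_preimage, neg_Iic, neg_zero]
    exact Iff.mpr integrableOn_Ici_iff_integrableOn_Ioi hIoi
  have := hIic.union hIoi
  rwa [Set.Iic_union_Ioi, integrableOn_univ] at this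

private lemma integrable_absrpow_exp {β : ℝ} (hβ : 1 ≤ β) {u : ℝ} (hu : 0 < u)
    {s : ℝ} (hs : 0 ≤ s) :
    Integrable (fun w : ℝ => |w| ^ s * Real.exp (-(u * |w| ^ β))) := by
  have h : IntegrableOn (fun y : ℝ => y ^ s * Real.exp (-(u * y ^ β))) (Set.Ioi 0) := by
    have := integrableOn_rpow_mul_exp_neg_mul_rpow (by linarith : (-1:ℝ) < s) (by linarith : (0:ℝ) < β) hu
    simpa [neg_mul] using this
  exact integrable_comp_abs' h

private lemma integrable_exp_kern {β : ℝ} (hβ : 1 ≤ β) {u : ℝ} (hu : 0 < u) :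
    Integrable (fun w : ℝ => Real.exp (-(u * |w| ^ β))) := by
  simpa using integrable_absrpow_exp hβ hu (le_refl (0:ℝ))

private lemma cont_kern {β : ℝ} (hβ : 0 ≤ β) (u : ℝ) :
    Continuous (fun w : ℝ => Real.exp (-(u * |w| ^ β))) :=
  Real.continuous_exp.comp
    ((continuous_const.mul (continuous_abs.rpow_const fun _ => Or.inr hβ)).neg)

private lemma integrable_cos_kern {β : ℝ} (hβ : 1 ≤ β) {u : ℝ} (hu : 0 < u) (x : ℝ) :
    Integrable (fun w : ℝ => Real.cos (x * w) * Real.exp (-(u * |w| ^ β))) := by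
  refine (integrable_exp_kern hβ hu).mono' ?_ ?_
  · exact ((Real.continuous_cos.comp (continuous_const.mul continuous_id)).mul
      (cont_kern (by linarith) u)).aestronglyMeasurable
  · refine Filter.Eventually.of_forall fun w => ?_
    rw [Real.norm_eq_abs, abs_mul, Real.abs_exp]
    exact mul_le_of_le_one_left (Real.exp_nonneg _) (Real.abs_cos_le_one _)

section Plemmas

variable {β : ℝ} {p : ℝ → ℝ → ℝ}

private lemma diff_eq (hβ : 1 ≤ β)
    (hp : ∀ u x : ℝ, p u x
      = (2 * Real.pi)⁻¹ * ∫ w : ℝ, Real.cos (x * w) * Real.exp (-(u * |w| ^ β)))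
    {u : ℝ} (hu : 0 < u) (x : ℝ) :
    p u 0 - p u x
      = (2 * Real.pi)⁻¹ * ∫ w : ℝ, (1 - Real.cos (x * w)) * Real.exp (-(u * |w| ^ β)) := by
  rw [hp, hp, ← mul_sub]
  congr 1
  rw [← integral_sub (integrable_cos_kern hβ hu 0) (integrable_cos_kern hβ hu x)]
  congr 1
  funext w
  simp [sub_mul]

private lemma int_one_sub_cos (hβ : 1 ≤ β) {u : ℝ} (hu : 0 < u) (x : ℝ) :
    Integrable (fun w : ℝ => (1 - Real.cos (x * w)) * Real.exp (-(u * |w| ^ β))) := by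
  have := (integrable_cos_kern hβ hu 0).sub (integrable_cos_kern hβ hu x)
  simpa [sub_mul, Pi.sub_def] using this

private lemma diff_nonneg (hβ : 1 ≤ β)
    (hp : ∀ u x : ℝ, p u x
      = (2 * Real.pi)⁻¹ * ∫ w : ℝ, Real.cos (x * w) * Real.exp (-(u * |w| ^ β)))
    {u : ℝ} (hu : 0 < u) (x : ℝ) : 0 ≤ p u 0 - p u x := by
  rw [diff_eq hβ hp hu x]
  refine mul_nonneg (by positivity) (integral_nonneg fun w => mul_nonneg ?_ (Real.exp_nonneg _))
  nlinarith [Real.cos_le_one (x * w)]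

private lemma diff_le (hβ : 1 ≤ β)
    (hp : ∀ u x : ℝ, p u x
      = (2 * Real.pi)⁻¹ * ∫ w : ℝ, Real.cos (x * w) * Real.exp (-(u * |w| ^ β)))
    {u : ℝ} (hu : 0 < u) (x : ℝ) : p u 0 - p u x ≤ 2 * p u 0 := by
  rw [diff_eq hβ hp hu x, hp u 0]
  have h2 : (∫ w : ℝ, (1 - Real.cos (x * w)) * Real.exp (-(u * |w| ^ β)))
      ≤ ∫ w : ℝ, 2 * Real.exp (-(u * |w| ^ β)) := by
    refine integral_mono (int_one_sub_cos hβ hu x)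
      ((integrable_exp_kern hβ hu).const_mul 2) fun w => ?_
    have h := Real.neg_one_le_cos (x * w)
    exact mul_le_mul_of_nonneg_right (by linarith) (Real.exp_nonneg _)
  have hπ : (0:ℝ) ≤ (2 * Real.pi)⁻¹ := by positivity
  calc (2 * Real.pi)⁻¹ * ∫ w : ℝ, (1 - Real.cos (x * w)) * Real.exp (-(u * |w| ^ β))
      ≤ (2 * Real.pi)⁻¹ * ∫ w : ℝ, 2 * Real.exp (-(u * |w| ^ β)) :=
        mul_le_mul_of_nonneg_left h2 hπ
    _ = 2 * ((2 * Real.pi)⁻¹ * ∫ w : ℝ, Real.cos (0 * w) * Real.exp (-(u * |w| ^ β))) := by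
        rw [integral_const_mul]
        simp only [zero_mul, Real.cos_zero, one_mul]
        ring

private lemma diff_quad (hβ : 1 ≤ β)
    (hp : ∀ u x : ℝ, p u x
      = (2 * Real.pi)⁻¹ * ∫ w : ℝ, Real.cos (x * w) * Real.exp (-(u * |w| ^ β)))
    (y : ℝ) :
    p 1 0 - p 1 y ≤ (2 * Real.pi)⁻¹
      * (y ^ 2 / 2 * ∫ w : ℝ, w ^ 2 * Real.exp (-(1 * |w| ^ β))) := by
  have hker : Integrable (fun w : ℝ => w ^ 2 * Real.exp (-(1 * |w| ^ β))) := by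
    have h := integrable_absrpow_exp hβ one_pos (s := 2) (by norm_num)
    refine h.congr (Filter.Eventually.of_forall fun w => ?_)
    show |w| ^ (2:ℝ) * Real.exp (-(1 * |w| ^ β)) = w ^ 2 * Real.exp (-(1 * |w| ^ β))
    rw [Real.rpow_two, sq_abs]
  rw [diff_eq hβ hp one_pos y]
  refine mul_le_mul_of_nonneg_left ?_ (by positivity)
  rw [← integral_const_mul]
  refine integral_mono (int_one_sub_cos hβ one_pos y) (hker.const_mul _) fun w => ?_
  have h := Real.one_sub_sq_div_two_le_cos (x := y * w)
  calc (1 - Real.cos (y * w)) * Real.exp (-(1 * |w| ^ β))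
      ≤ (y * w) ^ 2 / 2 * Real.exp (-(1 * |w| ^ β)) :=
        mul_le_mul_of_nonneg_right (by linarith) (Real.exp_nonneg _)
    _ = y ^ 2 / 2 * (w ^ 2 * Real.exp (-(1 * |w| ^ β))) := by ring

private lemma p_even
    (hp : ∀ u x : ℝ, p u x
      = (2 * Real.pi)⁻¹ * ∫ w : ℝ, Real.cos (x * w) * Real.exp (-(u * |w| ^ β)))
    (u y : ℝ) : p u (-y) = p u y := by
  rw [hp, hp]
  simp only [neg_mul, Real.cos_neg]

private lemma scaling (hβ1 : 1 < β)
    (hp : ∀ u x : ℝ, p u x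
      = (2 * Real.pi)⁻¹ * ∫ w : ℝ, Real.cos (x * w) * Real.exp (-(u * |w| ^ β)))
    {u : ℝ} (hu : 0 < u) (x : ℝ) :
    p u x = u ^ (-(1/β)) * p 1 (x * u ^ (-(1/β))) := by
  have hβ0 : (0:ℝ) < β := by linarith
  set s : ℝ := u ^ (-(1/β)) with hs_def
  have hspos : 0 < s := Real.rpow_pos_of_pos hu _
  have hsinv : s⁻¹ = u ^ (1/β) := by
    rw [hs_def, Real.rpow_neg hu.le, inv_inv]
  have hsβ : (s⁻¹) ^ β = u := by
    rw [hsinv, ← Real.rpow_mul hu.le, one_div_mul_cancel hβ0.ne', Real.rpow_one]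
  have h1 : (fun w : ℝ => Real.cos (x * w) * Real.exp (-(u * |w| ^ β)))
      = fun w => Real.cos ((x * s) * (s⁻¹ * w)) * Real.exp (-(1 * |s⁻¹ * w| ^ β)) := by
    funext w
    have harg : (x * s) * (s⁻¹ * w) = x * w := by
      rw [mul_assoc, ← mul_assoc s s⁻¹ w, mul_inv_cancel₀ hspos.ne', one_mul]
    rw [harg, one_mul, abs_mul, abs_of_pos (inv_pos.mpr hspos),
      Real.mul_rpow (inv_pos.mpr hspos).le (abs_nonneg w), hsβ]
  rw [hp u x, hp 1 (x * s), h1]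
  rw [show (fun w : ℝ => Real.cos ((x * s) * (s⁻¹ * w)) * Real.exp (-(1 * |s⁻¹ * w| ^ β)))
      = fun w : ℝ => (fun v : ℝ => Real.cos ((x * s) * v) * Real.exp (-(1 * |v| ^ β))) (s⁻¹ * w)
      from rfl]
  rw [MeasureTheory.Measure.integral_comp_mul_left
    (fun v : ℝ => Real.cos ((x * s) * v) * Real.exp (-(1 * |v| ^ β))) s⁻¹]
  rw [inv_inv, abs_of_pos hspos, smul_eq_mul]
  ring

private lemma cont_p1 (hβ : 1 ≤ β)
    (hp : ∀ u x : ℝ, p u x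
      = (2 * Real.pi)⁻¹ * ∫ w : ℝ, Real.cos (x * w) * Real.exp (-(u * |w| ^ β))) :
    Continuous fun y => p 1 y := by
  have hc : Continuous fun y : ℝ => ∫ w : ℝ, Real.cos (y * w) * Real.exp (-(1 * |w| ^ β)) := by
    apply MeasureTheory.continuous_of_dominated
      (bound := fun w : ℝ => Real.exp (-(1 * |w| ^ β)))
    · intro y
      exact ((Real.continuous_cos.comp (continuous_const.mul continuous_id)).mul
        (cont_kern (by linarith) 1)).aestronglyMeasurable
    · intro y
      refine Filter.Eventually.of_forall fun w => ?_
      rw [Real.norm_eq_abs, abs_mul, Real.abs_exp]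
      exact mul_le_of_le_one_left (Real.exp_nonneg _) (Real.abs_cos_le_one _)
    · exact integrable_exp_kern hβ one_pos
    · refine Filter.Eventually.of_forall fun w => ?_
      exact (Real.continuous_cos.comp (continuous_id.mul continuous_const)).mul continuous_const
  have heq : (fun y => p 1 y)
      = fun y => (2 * Real.pi)⁻¹ * ∫ w : ℝ, Real.cos (y * w) * Real.exp (-(1 * |w| ^ β)) :=
    funext fun y => hp 1 y
  rw [heq]
  exact continuous_const.mul hc

end Plemmas

/-- For `β ∈ (1,2)`, with
`p_u(x) := (2π)⁻¹ ∫ cos(xw)·e^{−u|w|^β} dw` the symmetric `β`-stable transition density,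
the constant `c := ∫_0^∞ (p_1(0) − p_1(u^{−1/β}))·u^{−1/β} du` is finite (the integrand is
integrable on `(0,∞)`), and for every `t > 0` there exists a constant `c₁`, depending only
on `t` and `β`, such that for every `x ≠ 0`,
`∫_0^t (p_u(0) − p_u(x)) du ≤ min(c₁, c·|x|^{β−1})`. -/
theorem stmt_12 (β : ℝ) (hβ : β ∈ Set.Ioo (1:ℝ) 2)
    (p : ℝ → ℝ → ℝ)
    (hp : ∀ u x : ℝ, p u x
      = (2 * Real.pi)⁻¹ * ∫ w : ℝ, Real.cos (x * w) * Real.exp (-(u * |w| ^ β))) :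
    IntegrableOn (fun u : ℝ => (p 1 0 - p 1 (u ^ (-(1/β)))) * u ^ (-(1/β)))
      (Set.Ioi 0) volume ∧
    ∀ t > (0:ℝ), ∃ c₁ : ℝ, ∀ x : ℝ, x ≠ 0 →
      (∫ u in Set.Ioc (0:ℝ) t, (p u 0 - p u x))
        ≤ min c₁
          ((∫ u in Set.Ioi (0:ℝ), (p 1 0 - p 1 (u ^ (-(1/β)))) * u ^ (-(1/β)))
            * |x| ^ (β - 1)) := by
  obtain ⟨hβ1, hβ2⟩ := hβ
  have hβ0 : (0:ℝ) < β := by linarith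
  set e : ℝ := -(1/β) with he_def
  set f : ℝ → ℝ := fun u : ℝ => (p 1 0 - p 1 (u ^ e)) * u ^ e with hf_def
  have hβinv : 1/β < 1 := (div_lt_one hβ0).mpr hβ1
  have hβinv0 : 0 < 1/β := by positivity
  have he : -1 < e := by rw [he_def]; linarith
  have he0 : e < 0 := by rw [he_def]; linarith
  -- continuity of f on Ioi 0
  have hre : ContinuousOn (fun u : ℝ => u ^ e) (Set.Ioi 0) :=
    continuousOn_id.rpow_const fun x hx => Or.inl (ne_of_gt hx)
  have hfc : ContinuousOn f (Set.Ioi 0) := by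
    have h1 : ContinuousOn (fun u : ℝ => p 1 (u ^ e)) (Set.Ioi 0) :=
      (cont_p1 hβ1.le hp).comp_continuousOn hre
    exact (continuousOn_const.sub h1).mul hre
  -- nonnegativity of f on Ioi 0
  have hf_nonneg : ∀ u : ℝ, 0 ≤ u → 0 ≤ f u := fun u hu =>
    mul_nonneg (diff_nonneg hβ1.le hp one_pos _) (Real.rpow_nonneg hu _)
  -- integrability of f on Ioc 0 1
  have hrpow_int : ∀ b : ℝ, 0 < b → IntegrableOn (fun u : ℝ => u ^ e) (Set.Ioc 0 b) := by
    intro b hb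
    have := intervalIntegral.intervalIntegrable_rpow' (a := 0) (b := b) he
    rwa [intervalIntegrable_iff_integrableOn_Ioc_of_le hb.le] at this
  have hf_Ioc : IntegrableOn f (Set.Ioc 0 1) := by
    refine Integrable.mono' ((hrpow_int 1 one_pos).const_mul (2 * p 1 0))
      ((hfc.mono Set.Ioc_subset_Ioi_self).aestronglyMeasurable measurableSet_Ioc) ?_
    rw [ae_restrict_iff' measurableSet_Ioc]
    refine Filter.Eventually.of_forall fun u hu => ?_
    rw [Real.norm_eq_abs, abs_of_nonneg (hf_nonneg u hu.1.le)]
    exact mul_le_mul_of_nonneg_right (diff_le hβ1.le hp one_pos _)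
      (Real.rpow_nonneg hu.1.le _)
  -- integrability of f on Ioi 1
  set K : ℝ := ∫ w : ℝ, w ^ 2 * Real.exp (-(1 * |w| ^ β)) with hK_def
  have he3 : e * 3 < -1 := by
    have h3β : (1:ℝ) < 1/β * 3 := by
      rw [div_mul_eq_mul_div, lt_div_iff₀ hβ0]; linarith
    rw [he_def, neg_mul]; linarith
  have hf_Ioi1 : IntegrableOn f (Set.Ioi 1) := by
    refine Integrable.mono'
      (((integrableOn_Ioi_rpow_of_lt he3 one_pos).const_mul ((2 * Real.pi)⁻¹ * (K / 2))))
      ((hfc.mono fun u (hu : u ∈ Set.Ioi (1:ℝ)) => (lt_trans one_pos (show (1:ℝ) < u from hu) : (0:ℝ) < u)).aestronglyMeasurable measurableSet_Ioi) ?_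
    rw [ae_restrict_iff' measurableSet_Ioi]
    refine Filter.Eventually.of_forall fun u hu => ?_
    have hu0 : (0:ℝ) < u := lt_trans one_pos hu
    rw [Real.norm_eq_abs, abs_of_nonneg (hf_nonneg u hu0.le)]
    have hstep : f u ≤ ((2 * Real.pi)⁻¹ * ((u ^ e) ^ 2 / 2 * K)) * u ^ e :=
      mul_le_mul_of_nonneg_right (diff_quad hβ1.le hp _) (Real.rpow_nonneg hu0.le _)
    have hexp : (u ^ e) ^ 2 * u ^ e = u ^ (e * 3) := by
      rw [sq, ← Real.rpow_add hu0, ← Real.rpow_add hu0]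
      congr 1; ring
    calc f u ≤ ((2 * Real.pi)⁻¹ * ((u ^ e) ^ 2 / 2 * K)) * u ^ e := hstep
      _ = (2 * Real.pi)⁻¹ * (K / 2) * ((u ^ e) ^ 2 * u ^ e) := by ring
      _ = (2 * Real.pi)⁻¹ * (K / 2) * u ^ (e * 3) := by rw [hexp]
  have hf_int : IntegrableOn f (Set.Ioi 0) := by
    have := hf_Ioc.union hf_Ioi1
    rwa [Set.Ioc_union_Ioi_eq_Ioi zero_le_one] at this
  refine ⟨hf_int, ?_⟩
  -- part 2
  intro t ht
  refine ⟨∫ u in Set.Ioc (0:ℝ) t, 2 * p 1 0 * u ^ e, fun x hx => ?_⟩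
  set a : ℝ := |x| with ha_def
  have ha : 0 < a := abs_pos.mpr hx
  have haβ : 0 < a ^ (-β) := Real.rpow_pos_of_pos ha _
  -- scaling identities
  have hpu0 : ∀ u : ℝ, 0 < u → p u 0 = u ^ e * p 1 0 := by
    intro u hu
    have := scaling hβ1 hp hu 0
    simpa [he_def] using this
  have hpux : ∀ u : ℝ, 0 < u → p u x = u ^ e * p 1 (a * u ^ e) := by
    intro u hu
    have h := scaling hβ1 hp hu x
    have hax : p 1 (a * u ^ e) = p 1 (x * u ^ e) := by
      rcases abs_choice x with h1 | h1
      · rw [ha_def, h1]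
      · rw [ha_def, h1, show -x * u ^ e = -(x * u ^ e) by ring, p_even hp]
    rw [hax]
    exact h
  have hg : Set.EqOn (fun u : ℝ => p u 0 - p u x)
      (fun u : ℝ => a⁻¹ * f (a ^ (-β) * u)) (Set.Ioi 0) := by
    intro u hu
    have hu0 : (0:ℝ) < u := hu
    have h1 : (a ^ (-β) * u) ^ e = a * u ^ e := by
      rw [Real.mul_rpow (Real.rpow_nonneg ha.le _) hu0.le, ← Real.rpow_mul ha.le,
        show -β * e = 1 by rw [he_def]; field_simp, Real.rpow_one]
    show p u 0 - p u x = a⁻¹ * ((p 1 0 - p 1 ((a ^ (-β) * u) ^ e)) * (a ^ (-β) * u) ^ e)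
    rw [h1, hpu0 u hu0, hpux u hu0]
    field_simp
  -- integrability of the difference on Ioi 0
  have hf' : IntegrableOn (fun u : ℝ => f (a ^ (-β) * u)) (Set.Ioi 0) := by
    have h := (integrableOn_Ioi_comp_mul_left_iff f 0 haβ).mpr (by rwa [mul_zero])
    exact h
  have hg_int : IntegrableOn (fun u : ℝ => p u 0 - p u x) (Set.Ioi 0) := by
    have hca : IntegrableOn (fun u : ℝ => a⁻¹ * f (a ^ (-β) * u)) (Set.Ioi 0) :=
      hf'.const_mul a⁻¹
    exact hca.congr_fun (fun u hu => (hg hu).symm) measurableSet_Ioi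
  -- value of the full integral
  have hval : (∫ u in Set.Ioi (0:ℝ), (p u 0 - p u x))
      = (∫ u in Set.Ioi (0:ℝ), f u) * a ^ (β - 1) := by
    have hpow : a⁻¹ * a ^ β = a ^ (β - 1) := by
      rw [← Real.rpow_neg_one a, ← Real.rpow_add ha]
      congr 1; ring
    calc (∫ u in Set.Ioi (0:ℝ), (p u 0 - p u x))
        = ∫ u in Set.Ioi (0:ℝ), a⁻¹ * f (a ^ (-β) * u) :=
          setIntegral_congr_fun measurableSet_Ioi hg
      _ = a⁻¹ * ∫ u in Set.Ioi (0:ℝ), f (a ^ (-β) * u) := integral_const_mul _ _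
      _ = a⁻¹ * ((a ^ (-β))⁻¹ * ∫ u in Set.Ioi (0:ℝ), f u) := by
          rw [integral_comp_mul_left_Ioi f 0 haβ, mul_zero, smul_eq_mul]
      _ = (∫ u in Set.Ioi (0:ℝ), f u) * a ^ (β - 1) := by
          rw [Real.rpow_neg ha.le, inv_inv, ← mul_assoc, hpow]
          ring
  -- the two bounds
  have hb1 : (∫ u in Set.Ioc (0:ℝ) t, (p u 0 - p u x))
      ≤ ∫ u in Set.Ioc (0:ℝ) t, 2 * p 1 0 * u ^ e := by
    refine setIntegral_mono_on (hg_int.mono_set Set.Ioc_subset_Ioi_self)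
      ((hrpow_int t ht).const_mul (2 * p 1 0)) measurableSet_Ioc fun u hu => ?_
    calc p u 0 - p u x ≤ 2 * p u 0 := diff_le hβ1.le hp hu.1 x
      _ = 2 * p 1 0 * u ^ e := by rw [hpu0 u hu.1]; ring
  have hb2 : (∫ u in Set.Ioc (0:ℝ) t, (p u 0 - p u x))
      ≤ ∫ u in Set.Ioi (0:ℝ), (p u 0 - p u x) := by
    refine setIntegral_mono_set hg_int ?_
      (HasSubset.Subset.eventuallyLE Set.Ioc_subset_Ioi_self)
    rw [Filter.EventuallyLE, ae_restrict_iff' measurableSet_Ioi]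
    exact Filter.Eventually.of_forall fun u hu => diff_nonneg hβ1.le hp hu x
  exact le_min hb1 (by rw [← hval]; exact hb2)
end
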